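/- arXiv:2101.02474 — 9 statements merged into one kernel-verified Lean document; each statement's English description precedes it below -/
import Mathlib

section
/- The full Lorentz profile integrates to 1 over [0,∞): ∫₀^∞ (4/π)·γν²/((ν₀²−ν²)² + 4γ²ν²) dν = 1, for γ > 0 and ν₀ > 0. -/
open MeasureTheory Real Set

namespace FLaux

lemma Dpos {γ ν₀ : ℝ} (hγ : 0 < γ) (hν₀ : 0 < ν₀) (ν : ℝ) :
    0 < (ν₀ ^ 2 - ν ^ 2) ^ 2 + 4 * γ ^ 2 * ν ^ 2 := by
  rcases eq_or_ne ν 0 with h | h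
  · simp [h]; positivity
  · have h1 : 0 < 4 * γ ^ 2 * ν ^ 2 := by positivity
    nlinarith [sq_nonneg (ν₀ ^ 2 - ν ^ 2)]

lemma base_integrable {γ : ℝ} (hγ : 0 < γ) :
    Integrable (fun u : ℝ => (4 * γ / π) / (u ^ 2 + 4 * γ ^ 2)) := by
  have h : (fun u : ℝ => (4 * γ / π) / (u ^ 2 + 4 * γ ^ 2))
      = fun u : ℝ => ((4 * γ / π) / (4 * γ ^ 2)) • (1 + (u * (2*γ)⁻¹) ^ 2)⁻¹ := by
    funext u
    have h2 : (2*γ) ≠ 0 := by positivity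
    have h4 : 1 + (u * (2*γ)⁻¹) ^ 2 = (u ^ 2 + 4 * γ ^ 2) / (4 * γ ^ 2) := by field_simp; ring
    rw [smul_eq_mul, h4]
    have := Real.pi_ne_zero
    field_simp
  rw [h]
  exact ((integrable_inv_one_add_sq.comp_mul_right' (R := (2*γ)⁻¹) (by positivity))).smul ((4 * γ / π) / (4 * γ ^ 2) : ℝ)

lemma base_integral {γ : ℝ} (hγ : 0 < γ) :
    ∫ u : ℝ, (4 * γ / π) / (u ^ 2 + 4 * γ ^ 2) = 2 := by
  have h : (fun u : ℝ => (4 * γ / π) / (u ^ 2 + 4 * γ ^ 2))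
      = fun u : ℝ => ((4 * γ / π) / (4 * γ ^ 2)) • (1 + (u * (2*γ)⁻¹) ^ 2)⁻¹ := by
    funext u
    have h2 : (2*γ) ≠ 0 := by positivity
    have h4 : 1 + (u * (2*γ)⁻¹) ^ 2 = (u ^ 2 + 4 * γ ^ 2) / (4 * γ ^ 2) := by field_simp; ring
    rw [smul_eq_mul, h4]
    have := Real.pi_ne_zero
    field_simp
  rw [h, integral_smul]
  rw [Measure.integral_comp_mul_right (fun u => (1 + u ^ 2)⁻¹) (2*γ)⁻¹]
  rw [integral_univ_inv_one_add_sq]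
  have hπ : π ≠ 0 := Real.pi_ne_zero
  rw [smul_eq_mul, smul_eq_mul]
  rw [abs_of_pos (show (0:ℝ) < (2*γ)⁻¹⁻¹ by rw [inv_inv]; positivity), inv_inv]
  field_simp

lemma phi_deriv {ν₀ : ℝ} :
    ∀ ν ∈ Ioi (0:ℝ), HasDerivWithinAt (fun ν : ℝ => ν - ν₀ ^ 2 / ν)
      (1 + ν₀ ^ 2 / ν ^ 2) (Ioi 0) ν := by
  intro ν hν
  have hν' : (ν : ℝ) ≠ 0 := ne_of_gt hν
  have h1 : HasDerivAt (fun ν : ℝ => ν - ν₀ ^ 2 / ν) (1 - ν₀ ^ 2 * (-(ν ^ 2)⁻¹)) ν := by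
    simpa [div_eq_mul_inv] using (hasDerivAt_id ν).fun_sub ((hasDerivAt_inv hν').const_mul (ν₀ ^ 2))
  have h2 : 1 - ν₀ ^ 2 * (-(ν ^ 2)⁻¹) = 1 + ν₀ ^ 2 / ν ^ 2 := by
    field_simp
    ring
  rw [h2] at h1
  exact h1.hasDerivWithinAt

lemma phi_inj {ν₀ : ℝ} (hν₀ : 0 < ν₀) :
    InjOn (fun ν : ℝ => ν - ν₀ ^ 2 / ν) (Ioi 0) := by
  apply StrictMonoOn.injOn
  intro a ha b hb hab
  have ha' : (0:ℝ) < a := ha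
  have hb' : (0:ℝ) < b := hb
  have h2 : ν₀ ^ 2 / b < ν₀ ^ 2 / a :=
    div_lt_div_of_pos_left (by positivity) ha' hab
  exact sub_lt_sub hab h2

lemma phi_surj {ν₀ : ℝ} (hν₀ : 0 < ν₀) :
    (fun ν : ℝ => ν - ν₀ ^ 2 / ν) '' Ioi 0 = univ := by
  apply eq_univ_of_forall
  intro y
  set s := Real.sqrt (y ^ 2 + 4 * ν₀ ^ 2) with hsdef
  have hs2 : s ^ 2 = y ^ 2 + 4 * ν₀ ^ 2 := Real.sq_sqrt (by positivity)
  have hs0 : 0 ≤ s := Real.sqrt_nonneg _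
  have hsy : |y| < s := by
    nlinarith [sq_abs y, abs_nonneg y]
  have hx : 0 < (y + s) / 2 := by
    have := neg_abs_le y; linarith
  refine ⟨(y + s) / 2, hx, ?_⟩
  have hys : (0:ℝ) < y + s := by linarith
  show (y + s) / 2 - ν₀ ^ 2 / ((y + s) / 2) = y
  field_simp [hys.ne']
  nlinarith [hs2]

lemma psi_deriv {ν₀ : ℝ} :
    ∀ ν ∈ Ioi (0:ℝ), HasDerivWithinAt (fun ν : ℝ => ν₀ ^ 2 / ν)
      (-(ν₀ ^ 2 / ν ^ 2)) (Ioi 0) ν := by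
  intro ν hν
  have hν' : (ν : ℝ) ≠ 0 := ne_of_gt hν
  have h1 : HasDerivAt (fun ν : ℝ => ν₀ ^ 2 / ν) (ν₀ ^ 2 * (-(ν ^ 2)⁻¹)) ν := by
    simpa [div_eq_mul_inv] using (hasDerivAt_inv hν').const_mul (ν₀ ^ 2)
  have h2 : ν₀ ^ 2 * (-(ν ^ 2)⁻¹) = -(ν₀ ^ 2 / ν ^ 2) := by field_simp
  rw [h2] at h1
  exact h1.hasDerivWithinAt

lemma psi_inj {ν₀ : ℝ} (hν₀ : 0 < ν₀) :
    InjOn (fun ν : ℝ => ν₀ ^ 2 / ν) (Ioi 0) := by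
  intro a ha b hb hab
  have ha' : (0:ℝ) < a := ha
  have hb' : (0:ℝ) < b := hb
  field_simp at hab
  linarith

lemma psi_surj {ν₀ : ℝ} (hν₀ : 0 < ν₀) :
    (fun ν : ℝ => ν₀ ^ 2 / ν) '' Ioi 0 = Ioi 0 := by
  apply Subset.antisymm
  · rintro _ ⟨x, hx, rfl⟩
    have : (0:ℝ) < x := hx
    exact div_pos (by positivity) this
  · intro y hy
    have hy' : (0:ℝ) < y := hy
    exact ⟨ν₀ ^ 2 / y, div_pos (by positivity) hy', by field_simp⟩

end FLaux

open FLaux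

theorem full_lorentz_normalized (γ ν₀ : ℝ) (hγ : 0 < γ) (hν₀ : 0 < ν₀) :
    ∫ ν in Set.Ioi (0 : ℝ),
      (4 / Real.pi) * (γ * ν ^ 2) / ((ν₀ ^ 2 - ν ^ 2) ^ 2 + 4 * γ ^ 2 * ν ^ 2) = 1 := by
  have hms : MeasurableSet (Ioi (0:ℝ)) := measurableSet_Ioi
  have hπ : (0:ℝ) < π := Real.pi_pos
  set fA : ℝ → ℝ := fun ν => (4 * γ / π) * ν ^ 2 / ((ν₀ ^ 2 - ν ^ 2) ^ 2 + 4 * γ ^ 2 * ν ^ 2) with hfA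
  set fB : ℝ → ℝ := fun ν => (4 * γ / π) * ν₀ ^ 2 / ((ν₀ ^ 2 - ν ^ 2) ^ 2 + 4 * γ ^ 2 * ν ^ 2) with hfB
  set fS : ℝ → ℝ := fun ν => (4 * γ / π) * (ν ^ 2 + ν₀ ^ 2) / ((ν₀ ^ 2 - ν ^ 2) ^ 2 + 4 * γ ^ 2 * ν ^ 2) with hfS
  set g : ℝ → ℝ := fun u => (4 * γ / π) / (u ^ 2 + 4 * γ ^ 2) with hg
  -- pointwise identity for substitution 1
  have hkey1 : ∀ ν ∈ Ioi (0:ℝ), |1 + ν₀ ^ 2 / ν ^ 2| • g (ν - ν₀ ^ 2 / ν) = fS ν := by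
    intro ν hν
    have hν' : (0:ℝ) < ν := hν
    have hD : (0:ℝ) < (ν₀ ^ 2 - ν ^ 2) ^ 2 + 4 * γ ^ 2 * ν ^ 2 := Dpos hγ hν₀ ν
    have hq : (0:ℝ) < (ν - ν₀ ^ 2 / ν) ^ 2 + 4 * γ ^ 2 := by positivity
    rw [abs_of_pos (by positivity), smul_eq_mul]
    simp only [hg, hfS]
    field_simp [hν'.ne', hD.ne', hq.ne', Real.pi_ne_zero]
    ring
  -- substitution 1: total
  have hsub1 : ∫ ν in Ioi (0:ℝ), fS ν = 2 := by
    have h := integral_image_eq_integral_abs_deriv_smul hms (phi_deriv (ν₀ := ν₀))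
      (phi_inj hν₀) g
    rw [phi_surj hν₀, setIntegral_univ] at h
    rw [← setIntegral_congr_fun hms hkey1, ← h, base_integral hγ]
  -- integrability of fS
  have hSint : IntegrableOn fS (Ioi 0) := by
    have h := (integrableOn_image_iff_integrableOn_abs_deriv_smul hms (phi_deriv (ν₀ := ν₀))
      (phi_inj hν₀) g).mp (by rw [phi_surj hν₀]; exact (base_integrable hγ).integrableOn)
    exact h.congr_fun hkey1 hms
  -- continuity / measurability of fA, fB
  have hcA : Continuous fA := by
    apply Continuous.div (by fun_prop) (by fun_prop)
    exact fun ν => ne_of_gt (Dpos hγ hν₀ ν)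
  have hcB : Continuous fB := by
    apply Continuous.div (by fun_prop) (by fun_prop)
    exact fun ν => ne_of_gt (Dpos hγ hν₀ ν)
  have hboundA : ∀ ν : ℝ, ‖fA ν‖ ≤ ‖fS ν‖ := by
    intro ν
    have hD : (0:ℝ) < (ν₀ ^ 2 - ν ^ 2) ^ 2 + 4 * γ ^ 2 * ν ^ 2 := Dpos hγ hν₀ ν
    simp only [hfA, hfS, Real.norm_eq_abs]
    rw [abs_of_nonneg (by positivity), abs_of_nonneg (by positivity)]
    gcongr
    nlinarith
  have hboundB : ∀ ν : ℝ, ‖fB ν‖ ≤ ‖fS ν‖ := by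
    intro ν
    have hD : (0:ℝ) < (ν₀ ^ 2 - ν ^ 2) ^ 2 + 4 * γ ^ 2 * ν ^ 2 := Dpos hγ hν₀ ν
    simp only [hfB, hfS, Real.norm_eq_abs]
    rw [abs_of_nonneg (by positivity), abs_of_nonneg (by positivity)]
    gcongr
    nlinarith
  have hAint : IntegrableOn fA (Ioi 0) :=
    Integrable.mono hSint hcA.aestronglyMeasurable.restrict
      (Filter.Eventually.of_forall hboundA)
  have hBint : IntegrableOn fB (Ioi 0) :=
    Integrable.mono hSint hcB.aestronglyMeasurable.restrict
      (Filter.Eventually.of_forall hboundB)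
  -- split
  have hsplit : ∫ ν in Ioi (0:ℝ), fS ν = (∫ ν in Ioi (0:ℝ), fA ν) + ∫ ν in Ioi (0:ℝ), fB ν := by
    rw [← integral_add hAint hBint]
    apply setIntegral_congr_fun hms
    intro ν _
    simp only [hfA, hfB, hfS]
    have hD : (0:ℝ) < (ν₀ ^ 2 - ν ^ 2) ^ 2 + 4 * γ ^ 2 * ν ^ 2 := Dpos hγ hν₀ ν
    field_simp
  -- substitution 2 : A = B
  have hAB : ∫ ν in Ioi (0:ℝ), fA ν = ∫ ν in Ioi (0:ℝ), fB ν := by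
    have h := integral_image_eq_integral_abs_deriv_smul hms (psi_deriv (ν₀ := ν₀))
      (psi_inj hν₀) fA
    rw [psi_surj hν₀] at h
    rw [h]
    apply setIntegral_congr_fun hms
    intro ν hν
    have hν' : (0:ℝ) < ν := hν
    have hD : (0:ℝ) < (ν₀ ^ 2 - ν ^ 2) ^ 2 + 4 * γ ^ 2 * ν ^ 2 := Dpos hγ hν₀ ν
    have hD2 : (0:ℝ) < (ν₀ ^ 2 - (ν₀ ^ 2 / ν) ^ 2) ^ 2 + 4 * γ ^ 2 * (ν₀ ^ 2 / ν) ^ 2 :=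
      Dpos hγ hν₀ _
    show |(-(ν₀ ^ 2 / ν ^ 2))| • fA (ν₀ ^ 2 / ν) = fB ν
    rw [abs_neg, abs_of_pos (by positivity), smul_eq_mul]
    simp only [hfA, hfB]
    field_simp [hν'.ne', hD.ne', hD2.ne', Real.pi_ne_zero]
    ring
  -- conclude
  have hA1 : ∫ ν in Ioi (0:ℝ), fA ν = 1 := by
    rw [hsplit, ← hAB] at hsub1
    linarith
  rw [← hA1]
  apply setIntegral_congr_fun hms
  intro ν _
  simp only [hfA]
  ring
end

section
/- The second sum rule for the full Lorentz profile: ∫₀^∞ f_FL(ν)/ν² dν = 1/ν₀², for γ > 0 and ν₀ > 0, where f_FL(ν) = (4/π)·γν²/((ν₀²−ν²)² + 4γ²ν²). -/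
open MeasureTheory Real Filter Set

noncomputable def FF (γ ν₀ : ℝ) (ν : ℝ) : ℝ :=
  if ν ≤ 0 then -(π / 2) else Real.arctan ((ν ^ 2 - ν₀ ^ 2) / (2 * γ * ν))

lemma Dpos (γ ν₀ : ℝ) (hγ : 0 < γ) (hν₀ : 0 < ν₀) (ν : ℝ) :
    0 < (ν₀ ^ 2 - ν ^ 2) ^ 2 + 4 * γ ^ 2 * ν ^ 2 := by
  rcases eq_or_ne ν 0 with h | h
  · simp [h]; positivity
  · have h1 : 0 < 4 * γ ^ 2 * ν ^ 2 := by positivity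
    nlinarith [sq_nonneg (ν₀ ^ 2 - ν ^ 2)]

lemma FFderiv (γ ν₀ : ℝ) (hγ : 0 < γ) (hν₀ : 0 < ν₀) (x : ℝ) (hx : x ∈ Ioi (0:ℝ)) :
    HasDerivAt (FF γ ν₀)
      (2 * γ * (x ^ 2 + ν₀ ^ 2) / ((ν₀ ^ 2 - x ^ 2) ^ 2 + 4 * γ ^ 2 * x ^ 2)) x := by
  have hx0 : 0 < x := hx
  have hden : 2 * γ * x ≠ 0 := by positivity
  have hu : HasDerivAt (fun ν : ℝ => (ν ^ 2 - ν₀ ^ 2) / (2 * γ * ν))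
      ((2 * x ^ 1 * (2 * γ * id x) - (x ^ 2 - ν₀ ^ 2) * (2 * γ * 1)) / (2 * γ * id x) ^ 2) x :=
    ((hasDerivAt_pow 2 x).sub_const (ν₀ ^ 2)).div
      ((hasDerivAt_id x).const_mul (2 * γ)) hden
  have ha := (Real.hasDerivAt_arctan ((x ^ 2 - ν₀ ^ 2) / (2 * γ * x))).comp x hu
  have heq : FF γ ν₀ =ᶠ[nhds x]
      fun ν => Real.arctan ((ν ^ 2 - ν₀ ^ 2) / (2 * γ * ν)) := by
    filter_upwards [eventually_gt_nhds hx0] with ν hν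
    simp [FF, not_le.2 hν]
  refine (ha.congr_of_eventuallyEq heq).congr_deriv ?_
  have hD := (Dpos γ ν₀ hγ hν₀ x).ne'
  simp only [id]
  field_simp
  ring

lemma FFcont (γ ν₀ : ℝ) (hγ : 0 < γ) (hν₀ : 0 < ν₀) :
    ContinuousWithinAt (FF γ ν₀) (Ici 0) 0 := by
  have hF0 : FF γ ν₀ 0 = -(π / 2) := by simp [FF]
  have hmain : Tendsto (FF γ ν₀) (nhds 0) (nhds (-(π / 2))) := by
    rw [← nhdsLE_sup_nhdsGT (a := (0:ℝ)), tendsto_sup]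
    constructor
    · apply Tendsto.congr' (f₁ := fun _ => -(π / 2)) _ tendsto_const_nhds
      filter_upwards [self_mem_nhdsWithin] with ν (hν : ν ≤ 0)
      simp [FF, hν]
    · have h1 : Tendsto (fun ν : ℝ => ν ^ 2 - ν₀ ^ 2) (nhdsWithin 0 (Ioi 0))
          (nhds (-(ν₀ ^ 2))) := by
        have : Tendsto (fun ν : ℝ => ν ^ 2 - ν₀ ^ 2) (nhds 0) (nhds (0 ^ 2 - ν₀ ^ 2)) :=
          ((continuous_pow 2).sub continuous_const).tendsto 0
        simpa using this.mono_left nhdsWithin_le_nhds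
      have h2 : Tendsto (fun ν : ℝ => (2 * γ * ν)⁻¹) (nhdsWithin 0 (Ioi 0)) atTop := by
        have := (tendsto_inv_nhdsGT_zero (𝕜 := ℝ)).const_mul_atTop
          (show (0:ℝ) < (2 * γ)⁻¹ by positivity)
        apply this.congr
        intro ν; simp [mul_inv]; ring
      have hu : Tendsto (fun ν : ℝ => (ν ^ 2 - ν₀ ^ 2) / (2 * γ * ν)) (nhdsWithin 0 (Ioi 0))
          atBot := by
        have := h1.neg_mul_atTop (neg_lt_zero.mpr (by positivity)) h2
        simpa [div_eq_mul_inv] using this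
      have := (Real.tendsto_arctan_atBot.mono_right nhdsWithin_le_nhds).comp hu
      apply this.congr'
      filter_upwards [self_mem_nhdsWithin] with ν (hν : 0 < ν)
      simp [FF, not_le.2 hν, Function.comp]
  rw [ContinuousWithinAt, hF0]
  exact hmain.mono_left nhdsWithin_le_nhds
lemma FFtop (γ ν₀ : ℝ) (hγ : 0 < γ) (hν₀ : 0 < ν₀) :
    Tendsto (FF γ ν₀) atTop (nhds (π / 2)) := by
  have ha : Tendsto (fun ν : ℝ => ν / (2 * γ)) atTop atTop :=
    tendsto_id.atTop_div_const (by positivity)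
  have hb : Tendsto (fun ν : ℝ => ν₀ ^ 2 / (2 * γ * ν)) atTop (nhds 0) := by
    apply Tendsto.div_atTop (tendsto_const_nhds (x := ν₀ ^ 2))
    exact tendsto_id.const_mul_atTop (by positivity)
  have hu : Tendsto (fun ν : ℝ => (ν ^ 2 - ν₀ ^ 2) / (2 * γ * ν)) atTop atTop := by
    apply (hb.neg.add_atTop ha).congr'
    filter_upwards [eventually_gt_atTop (0:ℝ)] with ν hν
    have hν' : ν ≠ 0 := hν.ne'
    field_simp
    ring
  have := (Real.tendsto_arctan_atTop.mono_right nhdsWithin_le_nhds).comp hu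
  apply this.congr'
  filter_upwards [eventually_gt_atTop (0:ℝ)] with ν hν
  simp [FF, not_le.2 hν, Function.comp]

lemma int1 (γ ν₀ : ℝ) (hγ : 0 < γ) (hν₀ : 0 < ν₀) :
    IntegrableOn (fun ν => 2 * γ * (ν ^ 2 + ν₀ ^ 2) /
      ((ν₀ ^ 2 - ν ^ 2) ^ 2 + 4 * γ ^ 2 * ν ^ 2)) (Ioi 0) :=
  integrableOn_Ioi_deriv_of_nonneg (FFcont γ ν₀ hγ hν₀) (FFderiv γ ν₀ hγ hν₀)
    (fun x _ => le_of_lt (div_pos (by positivity) (Dpos γ ν₀ hγ hν₀ x)))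
    (FFtop γ ν₀ hγ hν₀)

lemma key1 (γ ν₀ : ℝ) (hγ : 0 < γ) (hν₀ : 0 < ν₀) :
    ∫ ν in Ioi (0:ℝ), 2 * γ * (ν ^ 2 + ν₀ ^ 2) /
      ((ν₀ ^ 2 - ν ^ 2) ^ 2 + 4 * γ ^ 2 * ν ^ 2) = π := by
  rw [integral_Ioi_of_hasDerivAt_of_nonneg (FFcont γ ν₀ hγ hν₀) (FFderiv γ ν₀ hγ hν₀)
    (fun x _ => le_of_lt (div_pos (by positivity) (Dpos γ ν₀ hγ hν₀ x)))
    (FFtop γ ν₀ hγ hν₀)]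
  simp [FF]

lemma key2 (γ ν₀ : ℝ) (hγ : 0 < γ) (hν₀ : 0 < ν₀) :
    ∫ ν in Ioi (0:ℝ), (ν₀ ^ 2 - ν ^ 2) /
      ((ν₀ ^ 2 - ν ^ 2) ^ 2 + 4 * γ ^ 2 * ν ^ 2) = 0 := by
  set g : ℝ → ℝ := fun ν => (ν₀ ^ 2 - ν ^ 2) /
      ((ν₀ ^ 2 - ν ^ 2) ^ 2 + 4 * γ ^ 2 * ν ^ 2) with hg
  have himg : (fun t : ℝ => ν₀ ^ 2 / t) '' (Ioi 0) = Ioi 0 := by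
    ext y
    constructor
    · rintro ⟨t, ht, rfl⟩
      exact div_pos (by positivity : (0:ℝ) < ν₀ ^ 2) ht
    · intro hy
      exact ⟨ν₀ ^ 2 / y, div_pos (by positivity : (0:ℝ) < ν₀ ^ 2) hy, by field_simp⟩
  have hderiv : ∀ t ∈ Ioi (0:ℝ), HasDerivWithinAt (fun t : ℝ => ν₀ ^ 2 / t)
      (-(ν₀ ^ 2) / t ^ 2) (Ioi 0) t := by
    intro t ht
    have h1 : HasDerivAt (fun t : ℝ => ν₀ ^ 2 / t) (-(ν₀ ^ 2) / t ^ 2) t := by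
      have := (hasDerivAt_inv (ne_of_gt ht)).const_mul (ν₀ ^ 2)
      apply this.congr_deriv ?_ |>.congr_of_eventuallyEq ?_
      · field_simp
      · filter_upwards with x; rw [div_eq_mul_inv]
    exact h1.hasDerivWithinAt
  have hinj : InjOn (fun t : ℝ => ν₀ ^ 2 / t) (Ioi 0) := by
    intro a ha b hb h
    simp only at h
    rw [div_eq_div_iff (ne_of_gt ha) (ne_of_gt hb)] at h
    exact (mul_left_cancel₀ (by positivity : (ν₀:ℝ) ^ 2 ≠ 0) (by linarith)).symm
  have := integral_image_eq_integral_abs_deriv_smul measurableSet_Ioi hderiv hinj g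
  rw [himg] at this
  have heq : ∀ t ∈ Ioi (0:ℝ), |(-(ν₀ ^ 2) / t ^ 2)| • g (ν₀ ^ 2 / t) = -g t := by
    intro t ht
    have ht' : (t:ℝ) ≠ 0 := ne_of_gt ht
    have hD := (Dpos γ ν₀ hγ hν₀ t).ne'
    have habs : |(-(ν₀ ^ 2) / t ^ 2)| = ν₀ ^ 2 / t ^ 2 := by
      rw [abs_div, abs_neg, abs_of_nonneg (by positivity), abs_of_nonneg (by positivity)]
    rw [habs, smul_eq_mul, hg]
    have hD2 : (ν₀ ^ 2 - (ν₀ ^ 2 / t) ^ 2) ^ 2 + 4 * γ ^ 2 * (ν₀ ^ 2 / t) ^ 2 ≠ 0 :=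
      (Dpos γ ν₀ hγ hν₀ _).ne'
    field_simp
    ring
  rw [setIntegral_congr_fun measurableSet_Ioi heq] at this
  rw [integral_neg] at this
  linarith

lemma int2 (γ ν₀ : ℝ) (hγ : 0 < γ) (hν₀ : 0 < ν₀) :
    IntegrableOn (fun ν => (ν₀ ^ 2 - ν ^ 2) /
      ((ν₀ ^ 2 - ν ^ 2) ^ 2 + 4 * γ ^ 2 * ν ^ 2)) (Ioi 0) := by
  apply Integrable.mono ((int1 γ ν₀ hγ hν₀).const_mul (1 / (2 * γ)))
  · apply Continuous.aestronglyMeasurable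
    exact Continuous.div (by continuity) (by continuity)
      (fun ν => (Dpos γ ν₀ hγ hν₀ ν).ne')
  · filter_upwards with ν
    have hD := Dpos γ ν₀ hγ hν₀ ν
    rw [Real.norm_eq_abs, Real.norm_eq_abs]
    have h1 : 1 / (2 * γ) * (2 * γ * (ν ^ 2 + ν₀ ^ 2) /
        ((ν₀ ^ 2 - ν ^ 2) ^ 2 + 4 * γ ^ 2 * ν ^ 2)) =
        (ν ^ 2 + ν₀ ^ 2) / ((ν₀ ^ 2 - ν ^ 2) ^ 2 + 4 * γ ^ 2 * ν ^ 2) := by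
      field_simp
    rw [h1]
    have hnum : |ν₀ ^ 2 - ν ^ 2| ≤ ν ^ 2 + ν₀ ^ 2 := by
      calc |ν₀ ^ 2 - ν ^ 2| ≤ |ν₀ ^ 2| + |ν ^ 2| := abs_sub _ _
      _ = ν ^ 2 + ν₀ ^ 2 := by
        rw [abs_of_nonneg (sq_nonneg ν₀), abs_of_nonneg (sq_nonneg ν)]; ring
    calc |(ν₀ ^ 2 - ν ^ 2) / ((ν₀ ^ 2 - ν ^ 2) ^ 2 + 4 * γ ^ 2 * ν ^ 2)|
        = |ν₀ ^ 2 - ν ^ 2| / ((ν₀ ^ 2 - ν ^ 2) ^ 2 + 4 * γ ^ 2 * ν ^ 2) := by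
          rw [abs_div, abs_of_pos hD]
      _ ≤ (ν ^ 2 + ν₀ ^ 2) / ((ν₀ ^ 2 - ν ^ 2) ^ 2 + 4 * γ ^ 2 * ν ^ 2) := by
          rw [div_le_div_iff_of_pos_right hD]; exact hnum
      _ = |(ν ^ 2 + ν₀ ^ 2) / ((ν₀ ^ 2 - ν ^ 2) ^ 2 + 4 * γ ^ 2 * ν ^ 2)| := by
          rw [abs_of_nonneg (div_nonneg (by positivity) hD.le)]

theorem full_lorentz_second_sum_rule (γ ν₀ : ℝ) (hγ : 0 < γ) (hν₀ : 0 < ν₀) :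
    ∫ ν in Set.Ioi (0 : ℝ),
      ((4 / Real.pi) * (γ * ν ^ 2) / ((ν₀ ^ 2 - ν ^ 2) ^ 2 + 4 * γ ^ 2 * ν ^ 2)) / ν ^ 2
      = 1 / ν₀ ^ 2 := by
  have heq : ∀ ν ∈ Ioi (0:ℝ),
      ((4 / Real.pi) * (γ * ν ^ 2) / ((ν₀ ^ 2 - ν ^ 2) ^ 2 + 4 * γ ^ 2 * ν ^ 2)) / ν ^ 2
      = (1 / (π * ν₀ ^ 2)) * (2 * γ * (ν ^ 2 + ν₀ ^ 2) /
          ((ν₀ ^ 2 - ν ^ 2) ^ 2 + 4 * γ ^ 2 * ν ^ 2))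
        + (2 * γ / (π * ν₀ ^ 2)) * ((ν₀ ^ 2 - ν ^ 2) /
          ((ν₀ ^ 2 - ν ^ 2) ^ 2 + 4 * γ ^ 2 * ν ^ 2)) := by
    intro ν hν
    have hν' : (ν:ℝ) ≠ 0 := ne_of_gt hν
    have hD := (Dpos γ ν₀ hγ hν₀ ν).ne'
    have hπ := Real.pi_ne_zero
    field_simp
    ring
  rw [setIntegral_congr_fun measurableSet_Ioi heq,
    integral_add ((int1 γ ν₀ hγ hν₀).const_mul _) ((int2 γ ν₀ hγ hν₀).const_mul _),
    integral_const_mul, integral_const_mul, key1 γ ν₀ hγ hν₀, key2 γ ν₀ hγ hν₀]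
  rw [mul_zero, add_zero]
  field_simp
end

section
/- The function h(z) = (2/π)·z/(ν₀² − z² − 2iγz) is a Herglotz function: it is holomorphic on the open upper half-plane {z ∈ ℂ : Im z > 0} and satisfies Im h(z) ≥ 0 there, for γ > 0 and ν₀ > 0. -/
open Complex

theorem full_lorentz_herglotz (γ ν₀ : ℝ) (hγ : 0 < γ) (hν₀ : 0 < ν₀) :
    DifferentiableOn ℂ
      (fun z : ℂ => (2 / Real.pi : ℂ) * z / ((ν₀ : ℂ) ^ 2 - z ^ 2 - 2 * I * (γ : ℂ) * z))
      {z : ℂ | 0 < z.im} ∧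
    ∀ z : ℂ, 0 < z.im →
      0 ≤ ((2 / Real.pi : ℂ) * z / ((ν₀ : ℂ) ^ 2 - z ^ 2 - 2 * I * (γ : ℂ) * z)).im := by
  have key : ∀ z : ℂ, 0 < z.im → ((ν₀ : ℂ) ^ 2 - z ^ 2 - 2 * I * (γ : ℂ) * z) ≠ 0 := by
    intro z hz h0
    have hre := congrArg Complex.re h0
    have him := congrArg Complex.im h0
    simp [Complex.sub_re, Complex.sub_im, Complex.mul_re, Complex.mul_im, pow_two] at hre him
    have hx : z.re = 0 := by
      have h2 : z.re * (z.im + γ) = 0 := by nlinarith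
      rcases mul_eq_zero.mp h2 with h | h
      · exact h
      · nlinarith
    nlinarith
  constructor
  · apply DifferentiableOn.div
    · fun_prop
    · fun_prop
    · intro z hz; exact key z hz
  · intro z hz
    have hd := key z hz
    have hpos : 0 < Complex.normSq ((ν₀ : ℂ) ^ 2 - z ^ 2 - 2 * I * (γ : ℂ) * z) :=
      Complex.normSq_pos.mpr hd
    have hc : (2 / Real.pi : ℂ) = ((2 / Real.pi : ℝ) : ℂ) := by push_cast; ring
    have hcpos : (0 : ℝ) < 2 / Real.pi := by positivity
    rw [Complex.div_im, ← sub_div]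
    apply div_nonneg _ hpos.le
    rw [hc]
    simp only [Complex.mul_re, Complex.mul_im, Complex.sub_re, Complex.sub_im,
      Complex.ofReal_re, Complex.ofReal_im, Complex.I_re, Complex.I_im, Complex.re_ofNat, Complex.im_ofNat, pow_two]
    nlinarith [mul_pos hcpos hz, mul_pos hγ hz, sq_nonneg z.re, sq_nonneg z.im,
      mul_nonneg (mul_nonneg hcpos.le hγ.le) (sq_nonneg z.re),
      mul_nonneg (mul_nonneg hcpos.le hγ.le) (sq_nonneg z.im),
      mul_nonneg (mul_nonneg hcpos.le hz.le) (sq_nonneg z.re),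
      mul_nonneg (mul_nonneg hcpos.le hz.le) (sq_nonneg z.im),
      mul_pos (mul_pos hcpos hz) (mul_pos hν₀ hν₀)]
end

section
/- For fixed B > 0 and γ > 0, the relative error between the full Lorentz and Lorentz profiles converges uniformly to zero on the band |ν − ν₀| ≤ B as ν₀ → ∞: for every ε > 0 there exists N such that for all ν₀ > N and all ν with |ν − ν₀| ≤ B and ν > 0, |f_FL(ν) − f_L(ν−ν₀)| ≤ ε·f_L(ν−ν₀). -/
set_option maxHeartbeats 1000000 in
theorem full_lorentz_uniform_convergence (γ B : ℝ) (hγ : 0 < γ) (hB : 0 < B) :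
    ∀ ε > 0, ∃ N : ℝ, ∀ ν₀ > N, ∀ ν : ℝ, |ν - ν₀| ≤ B → 0 < ν →
      |(4 / Real.pi) * (γ * ν ^ 2) / ((ν₀ ^ 2 - ν ^ 2) ^ 2 + 4 * γ ^ 2 * ν ^ 2)
        - (1 / Real.pi) * γ / ((ν - ν₀) ^ 2 + γ ^ 2)|
      ≤ ε * ((1 / Real.pi) * γ / ((ν - ν₀) ^ 2 + γ ^ 2)) := by
  intro ε hε
  refine ⟨2 * B + 5 * B ^ 3 / (4 * ε * γ ^ 2) + 1, ?_⟩
  intro ν₀ hν₀ ν hx hν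
  have hπ : (0 : ℝ) < Real.pi := Real.pi_pos
  set x : ℝ := ν - ν₀ with hxdef
  have hD₂ : 0 < x ^ 2 + γ ^ 2 := by positivity
  have hD₁ : 0 < (ν₀ ^ 2 - ν ^ 2) ^ 2 + 4 * γ ^ 2 * ν ^ 2 := by positivity
  have hC : 0 ≤ 5 * B ^ 3 / (4 * ε * γ ^ 2) := by positivity
  obtain ⟨hxl, hxr⟩ := abs_le.mp hx
  have hνB : B ≤ ν := by linarith
  have hνC : 5 * B ^ 3 / (4 * ε * γ ^ 2) + 1 ≤ ν := by linarith
  have h4εγ : (0 : ℝ) < 4 * ε * γ ^ 2 := by positivity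
  have h5 : 5 * B ^ 3 ≤ 4 * ε * γ ^ 2 * ν := by
    have h := mul_le_mul_of_nonneg_left hνC h4εγ.le
    have h' : 4 * ε * γ ^ 2 * (5 * B ^ 3 / (4 * ε * γ ^ 2)) = 5 * B ^ 3 := by
      field_simp
    nlinarith [h, h', h4εγ]
  have hxB : |x| ≤ B := hx
  have hx3 : |x| ^ 3 ≤ B ^ 3 := by
    have h0 := abs_nonneg x
    gcongr
  have hν₀ν : ν₀ ≤ ν + B := by linarith
  have hpos : 0 < 3 * ν + ν₀ := by linarith
  have hmain : |x| ^ 3 * (3 * ν + ν₀) ≤ ε * ((ν₀ ^ 2 - ν ^ 2) ^ 2 + 4 * γ ^ 2 * ν ^ 2) := by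
    have h1 : |x| ^ 3 * (3 * ν + ν₀) ≤ B ^ 3 * (5 * ν) := by
      have ht : 3 * ν + ν₀ ≤ 5 * ν := by linarith
      calc |x| ^ 3 * (3 * ν + ν₀) ≤ B ^ 3 * (3 * ν + ν₀) :=
            mul_le_mul_of_nonneg_right hx3 hpos.le
        _ ≤ B ^ 3 * (5 * ν) := mul_le_mul_of_nonneg_left ht (by positivity)
    have h2 : B ^ 3 * (5 * ν) ≤ ε * (4 * γ ^ 2 * ν ^ 2) := by
      nlinarith [mul_le_mul_of_nonneg_right h5 hν.le]
    have h3 : ε * (4 * γ ^ 2 * ν ^ 2) ≤ ε * ((ν₀ ^ 2 - ν ^ 2) ^ 2 + 4 * γ ^ 2 * ν ^ 2) := by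
      nlinarith [mul_nonneg hε.le (sq_nonneg (ν₀ ^ 2 - ν ^ 2))]
    linarith
  have key : (4 / Real.pi) * (γ * ν ^ 2) / ((ν₀ ^ 2 - ν ^ 2) ^ 2 + 4 * γ ^ 2 * ν ^ 2)
        - (1 / Real.pi) * γ / ((ν - ν₀) ^ 2 + γ ^ 2)
      = γ * (x ^ 3 * (3 * ν + ν₀))
        / (Real.pi * (((ν₀ ^ 2 - ν ^ 2) ^ 2 + 4 * γ ^ 2 * ν ^ 2) * (x ^ 2 + γ ^ 2))) := by
    rw [hxdef]
    field_simp
    ring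
  rw [key]
  have hden : 0 < Real.pi * (((ν₀ ^ 2 - ν ^ 2) ^ 2 + 4 * γ ^ 2 * ν ^ 2) * (x ^ 2 + γ ^ 2)) := by
    positivity
  rw [abs_div, abs_of_pos hden]
  have habsnum : |γ * (x ^ 3 * (3 * ν + ν₀))| = γ * (|x| ^ 3 * (3 * ν + ν₀)) := by
    rw [abs_mul, abs_mul, abs_of_pos hγ, abs_of_pos hpos, abs_pow]
  rw [habsnum]
  have rhs_eq : ε * ((1 / Real.pi) * γ / ((ν - ν₀) ^ 2 + γ ^ 2))
      = γ * (ε * ((ν₀ ^ 2 - ν ^ 2) ^ 2 + 4 * γ ^ 2 * ν ^ 2))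
        / (Real.pi * (((ν₀ ^ 2 - ν ^ 2) ^ 2 + 4 * γ ^ 2 * ν ^ 2) * (x ^ 2 + γ ^ 2))) := by
    rw [hxdef]
    field_simp
  rw [rhs_eq]
  gcongr
end

section
/- Uniform error bound for the normalized Voigt relative error: for γ̃ > 0, 0 < a < 1, and all ν̃ ∈ ℝ, |(1/√π)·∫_{−∞}^{∞} e^{−t²}·t(2ν̃−t)/(γ̃²+(ν̃−t)²) dt| ≤ (1/(γ̃²+ν̃²))·(1/2 + |ν̃|/√π) + (1/(γ̃²+(1−a)²ν̃²))·((2+a)|ν̃|/(2√π)) + (1/γ̃²)·((2−a)|ν̃|/(2√π))·e^{−a²ν̃²}. -/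
open MeasureTheory Set Filter Real

lemma vh_tendsto_mul_exp : Tendsto (fun t : ℝ => t * Real.exp (-t ^ 2)) atTop (nhds 0) := by
  have h1 : Tendsto (fun t : ℝ => t * Real.exp (-t)) atTop (nhds 0) := by
    simpa using tendsto_pow_mul_exp_neg_atTop_nhds_zero 1
  refine squeeze_zero' ?_ ?_ h1
  · filter_upwards [eventually_ge_atTop (0:ℝ)] with t ht
    positivity
  · filter_upwards [eventually_ge_atTop (1:ℝ)] with t ht
    have h2 : -t ^ 2 ≤ -t := by nlinarith
    exact mul_le_mul_of_nonneg_left (Real.exp_le_exp.2 h2) (by linarith)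

lemma vh_tendsto_exp : Tendsto (fun t : ℝ => Real.exp (-t ^ 2)) atTop (nhds 0) :=
  Real.tendsto_exp_atBot.comp (tendsto_neg_atBot_iff.2 (tendsto_pow_atTop two_ne_zero))

lemma vh_integrable_mul_exp : Integrable (fun t : ℝ => t * Real.exp (-t ^ 2)) := by
  simpa using integrable_mul_exp_neg_mul_sq (b := 1) one_pos

lemma vh_integrable_exp : Integrable (fun t : ℝ => Real.exp (-t ^ 2)) := by
  simpa using integrable_exp_neg_mul_sq (b := 1) one_pos

lemma vh_integrable_abs_mul_exp : Integrable (fun t : ℝ => |t| * Real.exp (-t ^ 2)) := by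
  simpa [abs_mul, Real.abs_exp] using vh_integrable_mul_exp.abs

lemma vh_integrable_sq_mul_exp : Integrable (fun t : ℝ => t ^ 2 * Real.exp (-t ^ 2)) := by
  have := integrable_rpow_mul_exp_neg_mul_sq (b := 1) one_pos (s := 2) (by norm_num)
  have h2 : ∀ x : ℝ, x ^ (2:ℝ) = x ^ (2:ℕ) := fun x => by
    rw [show ((2:ℝ)) = ((2:ℕ):ℝ) by norm_num, Real.rpow_natCast]
  simpa [h2] using this

lemma vh_integral_Ioi_mul_exp (c : ℝ) :
    ∫ t in Ioi c, t * Real.exp (-t ^ 2) = Real.exp (-c ^ 2) / 2 := by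
  have hd : ∀ x ∈ Ici c, HasDerivAt (fun t : ℝ => -Real.exp (-t ^ 2) / 2)
      (x * Real.exp (-x ^ 2)) x := by
    intro x _
    have h : HasDerivAt (fun t : ℝ => -t ^ 2) (-(2 * x ^ 1)) x := (hasDerivAt_pow 2 x).neg
    have := (h.exp.neg).div_const 2
    refine this.congr_deriv ?_
    ring
  have := integral_Ioi_of_hasDerivAt_of_tendsto' hd vh_integrable_mul_exp.integrableOn
    (by simpa using (vh_tendsto_exp.neg.div_const 2))
  rw [this]; ring

lemma vh_gauss_Ioi : ∫ t in Ioi (0:ℝ), Real.exp (-t ^ 2) = Real.sqrt Real.pi / 2 := by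
  have := integral_gaussian_Ioi 1
  simpa using this

lemma vh_integral_Ioi_sq_mul_exp :
    ∫ t in Ioi (0:ℝ), t ^ 2 * Real.exp (-t ^ 2) = Real.sqrt Real.pi / 4 := by
  have hint2 : Integrable (fun t : ℝ => Real.exp (-t ^ 2) / 2) := vh_integrable_exp.div_const 2
  have key : ∫ t in Ioi (0:ℝ), (t ^ 2 * Real.exp (-t ^ 2) - Real.exp (-t ^ 2) / 2) = 0 := by
    have hd : ∀ x ∈ Ici (0:ℝ), HasDerivAt (fun t : ℝ => -(t * Real.exp (-t ^ 2)) / 2)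
        (x ^ 2 * Real.exp (-x ^ 2) - Real.exp (-x ^ 2) / 2) x := by
      intro x _
      have h : HasDerivAt (fun t : ℝ => -t ^ 2) (-(2 * x ^ 1)) x := (hasDerivAt_pow 2 x).neg
      have hx : HasDerivAt (fun t : ℝ => t * Real.exp (-t ^ 2))
          (1 * Real.exp (-x ^ 2) + x * (Real.exp (-x ^ 2) * (-(2 * x ^ 1)))) x :=
        (hasDerivAt_id x).mul h.exp
      have := (hx.neg).div_const 2
      refine this.congr_deriv ?_
      ring
    have := integral_Ioi_of_hasDerivAt_of_tendsto' hd
      ((vh_integrable_sq_mul_exp.sub hint2).integrableOn)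
      (by simpa using (vh_tendsto_mul_exp.neg.div_const 2))
    rw [this]; simp
  rw [integral_sub vh_integrable_sq_mul_exp.integrableOn hint2.integrableOn] at key
  have h2 : ∫ t in Ioi (0:ℝ), Real.exp (-t ^ 2) / 2 = Real.sqrt Real.pi / 4 := by
    rw [integral_div, vh_gauss_Ioi]; ring
  linarith [key, h2]

lemma vh_integral_Iic_sq_mul_exp :
    ∫ t in Iic (0:ℝ), t ^ 2 * Real.exp (-t ^ 2) = Real.sqrt Real.pi / 4 := by
  rw [show (0:ℝ) = -0 by norm_num, ← integral_comp_neg_Ioi]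
  simpa using vh_integral_Ioi_sq_mul_exp

lemma vh_integral_Iic_mul_exp :
    ∫ t in Iic (0:ℝ), t * Real.exp (-t ^ 2) = -(1 / 2) := by
  rw [show (0:ℝ) = -0 by norm_num, ← integral_comp_neg_Ioi]
  have : ∫ x in Ioi (0:ℝ), (-x) * Real.exp (-(-x) ^ 2) = -∫ x in Ioi (0:ℝ), x * Real.exp (-x ^ 2) := by
    rw [← integral_neg]; congr 1; funext x; simp
  rw [this, vh_integral_Ioi_mul_exp 0]
  norm_num

set_option maxHeartbeats 1000000 in
lemma voigt_core (γ' a ν' : ℝ) (hγ : 0 < γ') (ha : 0 < a) (ha1 : a < 1) (hν : 0 ≤ ν') :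
    |(1 / Real.sqrt Real.pi) * ∫ t : ℝ, Real.exp (-t ^ 2) *
        (t * (2 * ν' - t) / (γ' ^ 2 + (ν' - t) ^ 2))|
      ≤ (1 / (γ' ^ 2 + ν' ^ 2)) * (1 / 2 + |ν'| / Real.sqrt Real.pi)
        + (1 / (γ' ^ 2 + (1 - a) ^ 2 * ν' ^ 2)) * ((2 + a) * |ν'| / (2 * Real.sqrt Real.pi))
        + (1 / γ' ^ 2) * ((2 - a) * |ν'| / (2 * Real.sqrt Real.pi)) *
            Real.exp (-a ^ 2 * ν' ^ 2) := by
  set f : ℝ → ℝ := fun t => Real.exp (-t ^ 2) * (t * (2 * ν' - t) / (γ' ^ 2 + (ν' - t) ^ 2))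
    with hfdef
  have hπ : 0 < Real.sqrt Real.pi := Real.sqrt_pos.2 Real.pi_pos
  have hden : ∀ t : ℝ, 0 < γ' ^ 2 + (ν' - t) ^ 2 := fun t => by positivity
  have hC1 : 0 < γ' ^ 2 + ν' ^ 2 := by positivity
  have hC2 : 0 < γ' ^ 2 + (1 - a) ^ 2 * ν' ^ 2 := by positivity
  have hg2 : 0 < γ' ^ 2 := by positivity
  have hcont : Continuous f := by
    apply Continuous.mul (by fun_prop)
    exact Continuous.div (by fun_prop) (by fun_prop) (fun t => (hden t).ne')
  -- rough global bound
  have hbound : ∀ t : ℝ, |f t| ≤ Real.exp (-t ^ 2) * ((t ^ 2 + 2 * ν' * |t|) / γ' ^ 2) := by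
    intro t
    rw [hfdef]
    simp only
    rw [abs_mul, Real.abs_exp, abs_div, abs_of_pos (hden t)]
    apply mul_le_mul_of_nonneg_left _ (Real.exp_pos _).le
    apply div_le_div₀ (by positivity) _ hg2 (le_add_of_nonneg_right (by positivity))
    calc |t * (2 * ν' - t)| = |t| * |2 * ν' - t| := abs_mul _ _
      _ ≤ |t| * (2 * ν' + |t|) := by
          apply mul_le_mul_of_nonneg_left _ (abs_nonneg t)
          calc |2 * ν' - t| ≤ |2 * ν'| + |t| := abs_sub _ _
            _ = 2 * ν' + |t| := by rw [abs_of_nonneg (by linarith)]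
      _ = t ^ 2 + 2 * ν' * |t| := by rw [mul_add, ← sq_abs t]; ring
  have hmaj : Integrable (fun t : ℝ => Real.exp (-t ^ 2) * ((t ^ 2 + 2 * ν' * |t|) / γ' ^ 2)) := by
    have heq : (fun t : ℝ => Real.exp (-t ^ 2) * ((t ^ 2 + 2 * ν' * |t|) / γ' ^ 2))
        = fun t : ℝ => (t ^ 2 * Real.exp (-t ^ 2)) * (1 / γ' ^ 2)
          + (2 * ν' / γ' ^ 2) * (|t| * Real.exp (-t ^ 2)) := by
      funext t; field_simp
    rw [heq]
    exact (vh_integrable_sq_mul_exp.mul_const _).add (vh_integrable_abs_mul_exp.const_mul _)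
  have hf_int : Integrable f := by
    refine hmaj.mono' hcont.aestronglyMeasurable ?_
    filter_upwards with t
    rw [Real.norm_eq_abs]; exact hbound t
  have habs : ∀ s : Set ℝ, |∫ t in s, f t| ≤ ∫ t in s, |f t| := fun s => by
    simpa [Real.norm_eq_abs] using
      norm_integral_le_integral_norm (μ := (volume : Measure ℝ).restrict s) f
  have haν : 0 ≤ a * ν' := mul_nonneg ha.le hν
  have h2ν : a * ν' ≤ 2 * ν' := by nlinarith
  have hsplit : (∫ t : ℝ, f t) = (∫ t in Iic (0:ℝ), f t) + ((∫ t in Ioc (0:ℝ) (a * ν'), f t)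
      + ((∫ t in Ioc (a * ν') (2 * ν'), f t) + (∫ t in Ioi (2 * ν'), f t))) := by
    have e1 : (∫ t in Ioc (a * ν') (2 * ν'), f t) + (∫ t in Ioi (2 * ν'), f t)
        = ∫ t in Ioi (a * ν'), f t := by
      rw [← setIntegral_union (Ioc_disjoint_Ioi le_rfl) measurableSet_Ioi
        hf_int.integrableOn hf_int.integrableOn, Ioc_union_Ioi_eq_Ioi h2ν]
    have e2 : (∫ t in Ioc (0:ℝ) (a * ν'), f t) + (∫ t in Ioi (a * ν'), f t)
        = ∫ t in Ioi (0:ℝ), f t := by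
      rw [← setIntegral_union (Ioc_disjoint_Ioi le_rfl) measurableSet_Ioi
        hf_int.integrableOn hf_int.integrableOn, Ioc_union_Ioi_eq_Ioi haν]
    rw [e1, e2, intervalIntegral.integral_Iic_add_Ioi hf_int.integrableOn hf_int.integrableOn]
  -- Region 1
  have hb1 : |∫ t in Iic (0:ℝ), f t|
      ≤ (Real.sqrt Real.pi / 4 + ν') / (γ' ^ 2 + ν' ^ 2) := by
    have hmaj1 : Integrable (fun t : ℝ =>
        (t ^ 2 * Real.exp (-t ^ 2) - 2 * ν' * (t * Real.exp (-t ^ 2))) / (γ' ^ 2 + ν' ^ 2)) :=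
      (vh_integrable_sq_mul_exp.sub (vh_integrable_mul_exp.const_mul _)).div_const _
    calc |∫ t in Iic (0:ℝ), f t| ≤ ∫ t in Iic (0:ℝ), |f t| := habs _
      _ ≤ ∫ t in Iic (0:ℝ),
          (t ^ 2 * Real.exp (-t ^ 2) - 2 * ν' * (t * Real.exp (-t ^ 2))) / (γ' ^ 2 + ν' ^ 2) := by
          apply setIntegral_mono_on hf_int.abs.integrableOn hmaj1.integrableOn measurableSet_Iic
          intro t ht
          simp only [mem_Iic] at ht
          have h1 : |f t| = Real.exp (-t ^ 2) * ((t ^ 2 - 2 * ν' * t) / (γ' ^ 2 + (ν' - t) ^ 2)) := by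
            rw [hfdef]; simp only
            rw [abs_mul, Real.abs_exp, abs_div, abs_of_pos (hden t)]
            congr 1
            rw [abs_of_nonpos (by nlinarith)]; ring
          rw [h1]
          have h2 : Real.exp (-t ^ 2) * ((t ^ 2 - 2 * ν' * t) / (γ' ^ 2 + (ν' - t) ^ 2))
              ≤ Real.exp (-t ^ 2) * ((t ^ 2 - 2 * ν' * t) / (γ' ^ 2 + ν' ^ 2)) := by
            apply mul_le_mul_of_nonneg_left _ (Real.exp_pos _).le
            apply div_le_div₀ (by nlinarith) le_rfl hC1 (by nlinarith)
          exact h2.trans (le_of_eq (by ring))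
      _ = (Real.sqrt Real.pi / 4 + ν') / (γ' ^ 2 + ν' ^ 2) := by
          rw [integral_div, integral_sub vh_integrable_sq_mul_exp.integrableOn
            ((vh_integrable_mul_exp.const_mul _).integrableOn), integral_const_mul,
            vh_integral_Iic_sq_mul_exp, vh_integral_Iic_mul_exp]
          ring
  -- Region 2
  have hb2 : |∫ t in Ioc (0:ℝ) (a * ν'), f t|
      ≤ ν' / (γ' ^ 2 + (1 - a) ^ 2 * ν' ^ 2) := by
    have hmaj2 : Integrable (fun t : ℝ =>
        2 * ν' * (t * Real.exp (-t ^ 2)) / (γ' ^ 2 + (1 - a) ^ 2 * ν' ^ 2)) :=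
      (vh_integrable_mul_exp.const_mul _).div_const _
    calc |∫ t in Ioc (0:ℝ) (a * ν'), f t| ≤ ∫ t in Ioc (0:ℝ) (a * ν'), |f t| := habs _
      _ ≤ ∫ t in Ioc (0:ℝ) (a * ν'),
          2 * ν' * (t * Real.exp (-t ^ 2)) / (γ' ^ 2 + (1 - a) ^ 2 * ν' ^ 2) := by
          apply setIntegral_mono_on hf_int.abs.integrableOn hmaj2.integrableOn measurableSet_Ioc
          intro t ht
          obtain ⟨ht0, hta⟩ := ht
          have h1 : |f t| = Real.exp (-t ^ 2) * (t * (2 * ν' - t) / (γ' ^ 2 + (ν' - t) ^ 2)) := by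
            rw [hfdef]; simp only
            rw [abs_mul, Real.abs_exp, abs_div, abs_of_pos (hden t)]
            congr 1
            rw [abs_of_nonneg (by nlinarith)]
          rw [h1]
          have e1 : 0 ≤ a * ν' - t := by linarith
          have e2 : 0 ≤ ν' - t + (1 - a) * ν' := by nlinarith
          have hd2 : γ' ^ 2 + (1 - a) ^ 2 * ν' ^ 2 ≤ γ' ^ 2 + (ν' - t) ^ 2 := by
            nlinarith [mul_nonneg e1 e2]
          calc Real.exp (-t ^ 2) * (t * (2 * ν' - t) / (γ' ^ 2 + (ν' - t) ^ 2))
              ≤ Real.exp (-t ^ 2) * (t * (2 * ν') / (γ' ^ 2 + (1 - a) ^ 2 * ν' ^ 2)) := by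
                apply mul_le_mul_of_nonneg_left _ (Real.exp_pos _).le
                apply div_le_div₀ (mul_nonneg ht0.le (by linarith)) (by nlinarith [sq_nonneg t])
                  hC2 hd2
            _ = 2 * ν' * (t * Real.exp (-t ^ 2)) / (γ' ^ 2 + (1 - a) ^ 2 * ν' ^ 2) := by ring
      _ ≤ ∫ t in Ioi (0:ℝ),
          2 * ν' * (t * Real.exp (-t ^ 2)) / (γ' ^ 2 + (1 - a) ^ 2 * ν' ^ 2) := by
          apply setIntegral_mono_set hmaj2.integrableOn ?_
            (HasSubset.Subset.eventuallyLE Ioc_subset_Ioi_self)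
          filter_upwards [ae_restrict_mem measurableSet_Ioi] with t ht
          have ht0 : (0:ℝ) < t := ht
          have := (Real.exp_pos (-t ^ 2)).le
          apply div_nonneg (mul_nonneg (by linarith) (mul_nonneg ht0.le this)) hC2.le
      _ = ν' / (γ' ^ 2 + (1 - a) ^ 2 * ν' ^ 2) := by
          rw [integral_div, integral_const_mul, vh_integral_Ioi_mul_exp 0]
          rw [show -(0:ℝ) ^ 2 = 0 by ring, Real.exp_zero]
          ring
  -- Region 3
  have hb3 : |∫ t in Ioc (a * ν') (2 * ν'), f t|
      ≤ (2 - a) * ν' * Real.exp (-a ^ 2 * ν' ^ 2) / (2 * γ' ^ 2) := by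
    have hmaj3 : Integrable (fun t : ℝ =>
        (2 - a) * ν' * (t * Real.exp (-t ^ 2)) / γ' ^ 2) :=
      (vh_integrable_mul_exp.const_mul _).div_const _
    calc |∫ t in Ioc (a * ν') (2 * ν'), f t| ≤ ∫ t in Ioc (a * ν') (2 * ν'), |f t| := habs _
      _ ≤ ∫ t in Ioc (a * ν') (2 * ν'),
          (2 - a) * ν' * (t * Real.exp (-t ^ 2)) / γ' ^ 2 := by
          apply setIntegral_mono_on hf_int.abs.integrableOn hmaj3.integrableOn measurableSet_Ioc
          intro t ht
          obtain ⟨ht0, ht2⟩ := ht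
          have htpos : 0 ≤ t := le_trans haν ht0.le
          have h1 : |f t| = Real.exp (-t ^ 2) * (t * (2 * ν' - t) / (γ' ^ 2 + (ν' - t) ^ 2)) := by
            rw [hfdef]; simp only
            rw [abs_mul, Real.abs_exp, abs_div, abs_of_pos (hden t)]
            congr 1
            rw [abs_of_nonneg (mul_nonneg htpos (by linarith))]
          rw [h1]
          calc Real.exp (-t ^ 2) * (t * (2 * ν' - t) / (γ' ^ 2 + (ν' - t) ^ 2))
              ≤ Real.exp (-t ^ 2) * (t * ((2 - a) * ν') / γ' ^ 2) := by
                apply mul_le_mul_of_nonneg_left _ (Real.exp_pos _).le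
                apply div_le_div₀ (mul_nonneg htpos (mul_nonneg (by linarith) hν))
                  (mul_le_mul_of_nonneg_left (by linarith) htpos)
                  hg2 (le_add_of_nonneg_right (sq_nonneg _))
            _ = (2 - a) * ν' * (t * Real.exp (-t ^ 2)) / γ' ^ 2 := by ring
      _ ≤ ∫ t in Ioi (a * ν'),
          (2 - a) * ν' * (t * Real.exp (-t ^ 2)) / γ' ^ 2 := by
          apply setIntegral_mono_set hmaj3.integrableOn ?_
            (HasSubset.Subset.eventuallyLE Ioc_subset_Ioi_self)
          filter_upwards [ae_restrict_mem measurableSet_Ioi] with t ht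
          have ht0 : 0 ≤ t := le_trans haν (le_of_lt ht)
          have := (Real.exp_pos (-t ^ 2)).le
          apply div_nonneg (mul_nonneg (mul_nonneg (by linarith) hν) (mul_nonneg ht0 this)) hg2.le
      _ = (2 - a) * ν' * Real.exp (-a ^ 2 * ν' ^ 2) / (2 * γ' ^ 2) := by
          rw [integral_div, integral_const_mul, vh_integral_Ioi_mul_exp]
          rw [show -(a * ν') ^ 2 = -a ^ 2 * ν' ^ 2 by ring]
          ring
  -- Region 4
  have hb4 : |∫ t in Ioi (2 * ν'), f t|
      ≤ (Real.sqrt Real.pi / 4) / (γ' ^ 2 + ν' ^ 2) := by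
    have hmaj4 : Integrable (fun t : ℝ =>
        t ^ 2 * Real.exp (-t ^ 2) / (γ' ^ 2 + ν' ^ 2)) :=
      vh_integrable_sq_mul_exp.div_const _
    calc |∫ t in Ioi (2 * ν'), f t| ≤ ∫ t in Ioi (2 * ν'), |f t| := habs _
      _ ≤ ∫ t in Ioi (2 * ν'), t ^ 2 * Real.exp (-t ^ 2) / (γ' ^ 2 + ν' ^ 2) := by
          apply setIntegral_mono_on hf_int.abs.integrableOn hmaj4.integrableOn measurableSet_Ioi
          intro t ht
          have ht2 : 2 * ν' < t := ht
          have htpos : 0 ≤ t := by linarith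
          have h1 : |f t| = Real.exp (-t ^ 2) * (t * (t - 2 * ν') / (γ' ^ 2 + (ν' - t) ^ 2)) := by
            rw [hfdef]; simp only
            rw [abs_mul, Real.abs_exp, abs_div, abs_of_pos (hden t)]
            congr 1
            rw [abs_of_nonpos (mul_nonpos_iff.2 (Or.inl ⟨htpos, by linarith⟩))]; ring
          rw [h1]
          calc Real.exp (-t ^ 2) * (t * (t - 2 * ν') / (γ' ^ 2 + (ν' - t) ^ 2))
              ≤ Real.exp (-t ^ 2) * (t ^ 2 / (γ' ^ 2 + ν' ^ 2)) := by
                apply mul_le_mul_of_nonneg_left _ (Real.exp_pos _).le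
                apply div_le_div₀ (sq_nonneg t)
                  (by nlinarith [mul_nonneg hν htpos]) hC1
                  (by nlinarith [mul_nonneg htpos (by linarith : (0:ℝ) ≤ t - 2 * ν')])
            _ = t ^ 2 * Real.exp (-t ^ 2) / (γ' ^ 2 + ν' ^ 2) := by ring
      _ ≤ ∫ t in Ioi (0:ℝ), t ^ 2 * Real.exp (-t ^ 2) / (γ' ^ 2 + ν' ^ 2) := by
          apply setIntegral_mono_set hmaj4.integrableOn ?_
            (HasSubset.Subset.eventuallyLE (Ioi_subset_Ioi (by linarith)))
          filter_upwards with t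
          positivity
      _ = (Real.sqrt Real.pi / 4) / (γ' ^ 2 + ν' ^ 2) := by
          rw [integral_div, vh_integral_Ioi_sq_mul_exp]
  -- assemble
  have htotal : |∫ t : ℝ, f t|
      ≤ (Real.sqrt Real.pi / 4 + ν') / (γ' ^ 2 + ν' ^ 2)
        + (ν' / (γ' ^ 2 + (1 - a) ^ 2 * ν' ^ 2)
          + ((2 - a) * ν' * Real.exp (-a ^ 2 * ν' ^ 2) / (2 * γ' ^ 2)
            + (Real.sqrt Real.pi / 4) / (γ' ^ 2 + ν' ^ 2))) := by
    rw [hsplit]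
    exact (abs_add_le _ _).trans (add_le_add hb1 ((abs_add_le _ _).trans (add_le_add hb2
      ((abs_add_le _ _).trans (add_le_add hb3 hb4)))))
  rw [abs_mul, abs_of_pos (by positivity : (0:ℝ) < 1 / Real.sqrt Real.pi),
    abs_of_nonneg hν]
  have hmul := mul_le_mul_of_nonneg_left htotal
    (by positivity : (0:ℝ) ≤ 1 / Real.sqrt Real.pi)
  refine hmul.trans ?_
  set s := Real.sqrt Real.pi
  have hA : (1 / s) * ((s / 4 + ν') / (γ' ^ 2 + ν' ^ 2))
      + (1 / s) * ((s / 4) / (γ' ^ 2 + ν' ^ 2))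
      = (1 / (γ' ^ 2 + ν' ^ 2)) * (1 / 2 + ν' / s) := by
    field_simp
    ring
  have hB : (1 / s) * (ν' / (γ' ^ 2 + (1 - a) ^ 2 * ν' ^ 2))
      ≤ (1 / (γ' ^ 2 + (1 - a) ^ 2 * ν' ^ 2)) * ((2 + a) * ν' / (2 * s)) := by
    have hdiff : (1 / (γ' ^ 2 + (1 - a) ^ 2 * ν' ^ 2)) * ((2 + a) * ν' / (2 * s))
        - (1 / s) * (ν' / (γ' ^ 2 + (1 - a) ^ 2 * ν' ^ 2))
        = (a * ν') / (2 * s * (γ' ^ 2 + (1 - a) ^ 2 * ν' ^ 2)) := by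
      field_simp
      ring
    have hnn : 0 ≤ (a * ν') / (2 * s * (γ' ^ 2 + (1 - a) ^ 2 * ν' ^ 2)) :=
      div_nonneg (mul_nonneg ha.le hν) (by positivity)
    linarith
  have hC : (1 / s) * ((2 - a) * ν' * Real.exp (-a ^ 2 * ν' ^ 2) / (2 * γ' ^ 2))
      = (1 / γ' ^ 2) * ((2 - a) * ν' / (2 * s)) * Real.exp (-a ^ 2 * ν' ^ 2) := by
    ring
  have hexp : (1 / s) * ((s / 4 + ν') / (γ' ^ 2 + ν' ^ 2)
      + (ν' / (γ' ^ 2 + (1 - a) ^ 2 * ν' ^ 2)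
        + ((2 - a) * ν' * Real.exp (-a ^ 2 * ν' ^ 2) / (2 * γ' ^ 2)
          + (s / 4) / (γ' ^ 2 + ν' ^ 2))))
      = (1 / s) * ((s / 4 + ν') / (γ' ^ 2 + ν' ^ 2))
        + (1 / s) * (ν' / (γ' ^ 2 + (1 - a) ^ 2 * ν' ^ 2))
        + (1 / s) * ((2 - a) * ν' * Real.exp (-a ^ 2 * ν' ^ 2) / (2 * γ' ^ 2))
        + (1 / s) * ((s / 4) / (γ' ^ 2 + ν' ^ 2)) := by ring
  linarith [hA, hB, hC, hexp]

theorem voigt_uniform_error_bound (γ' a ν' : ℝ) (hγ : 0 < γ') (ha : 0 < a) (ha1 : a < 1) :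
    |(1 / Real.sqrt Real.pi) * ∫ t : ℝ, Real.exp (-t ^ 2) *
        (t * (2 * ν' - t) / (γ' ^ 2 + (ν' - t) ^ 2))|
      ≤ (1 / (γ' ^ 2 + ν' ^ 2)) * (1 / 2 + |ν'| / Real.sqrt Real.pi)
        + (1 / (γ' ^ 2 + (1 - a) ^ 2 * ν' ^ 2)) * ((2 + a) * |ν'| / (2 * Real.sqrt Real.pi))
        + (1 / γ' ^ 2) * ((2 - a) * |ν'| / (2 * Real.sqrt Real.pi)) *
            Real.exp (-a ^ 2 * ν' ^ 2) := by
  rcases le_or_gt 0 ν' with hν | hν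
  · exact voigt_core γ' a ν' hγ ha ha1 hν
  · have h := voigt_core γ' a (-ν') hγ ha ha1 (by linarith)
    have hint : (∫ t : ℝ, Real.exp (-t ^ 2) * (t * (2 * ν' - t) / (γ' ^ 2 + (ν' - t) ^ 2)))
        = ∫ t : ℝ, Real.exp (-t ^ 2) * (t * (2 * -ν' - t) / (γ' ^ 2 + (-ν' - t) ^ 2)) := by
      rw [← integral_neg_eq_self (f := fun t : ℝ =>
        Real.exp (-t ^ 2) * (t * (2 * -ν' - t) / (γ' ^ 2 + (-ν' - t) ^ 2)))]
      congr 1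
      funext t
      rw [show (-(t:ℝ)) ^ 2 = t ^ 2 by ring,
        show (-ν' - -t : ℝ) ^ 2 = (ν' - t) ^ 2 by ring,
        show (-t * (2 * -ν' - -t) : ℝ) = t * (2 * ν' - t) by ring]
    rw [hint]
    simpa [neg_sq, abs_neg] using h
end

section
/- Far-wing uniform bound: for fixed n₁ > 0 and any ε > 0 there exists n₃ > 0 such that for all γ̃ ≥ n₁·√(ln 2) and all ν̃ with |ν̃| > n₃·√(ln 2), the normalized Voigt relative error satisfies |(1/√π)·∫_{−∞}^{∞} e^{−t²}·t(2ν̃−t)/(γ̃²+(ν̃−t)²) dt| < ε. -/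
open MeasureTheory

private lemma abs_le_exp_sq_quarter (t : ℝ) : |t| ≤ Real.exp (t ^ 2 / 4) := by
  nlinarith [Real.add_one_le_exp (t ^ 2 / 4), abs_nonneg t, sq_abs t, sq_nonneg (|t| - 2)]

private lemma sq_le_two_exp_sq_quarter (t : ℝ) : t ^ 2 ≤ 2 * Real.exp (t ^ 2 / 4) := by
  have he : Real.exp (t ^ 2 / 4) = Real.exp (t ^ 2 / 8) * Real.exp (t ^ 2 / 8) := by
    rw [← Real.exp_add]; ring_nf
  nlinarith [Real.add_one_le_exp (t ^ 2 / 8), sq_nonneg (1 - t ^ 2 / 8), Real.exp_pos (t ^ 2 / 8)]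

private lemma pointwise_bound (γ ν : ℝ) (hγ : 0 < γ) (hν : 0 < |ν|) (t : ℝ) :
    |Real.exp (-t ^ 2) * (t * (2 * ν - t) / (γ ^ 2 + (ν - t) ^ 2))| ≤
      (10 / |ν| + 10 * Real.exp (-ν ^ 2 / 8) / γ ^ 2) * Real.exp (-t ^ 2 / 4) := by
  have hden : 0 < γ ^ 2 + (ν - t) ^ 2 := by positivity
  have habs : |Real.exp (-t ^ 2) * (t * (2 * ν - t) / (γ ^ 2 + (ν - t) ^ 2))| =
      Real.exp (-t ^ 2) * (|t * (2 * ν - t)| / (γ ^ 2 + (ν - t) ^ 2)) := by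
    rw [abs_mul, abs_of_pos (Real.exp_pos _), abs_div, abs_of_pos hden]
  rw [habs]
  have hC2 : 0 ≤ 10 * Real.exp (-ν ^ 2 / 8) / γ ^ 2 := by positivity
  have hC1 : 0 ≤ 10 / |ν| := by positivity
  rcases le_or_gt (|t|) (|ν| / 2) with ht | ht
  · -- |t| ≤ |ν|/2 : denominator is large
    have hd : ν ^ 2 / 4 ≤ γ ^ 2 + (ν - t) ^ 2 := by
      have h1 : |ν| - |t| ≤ |ν - t| := abs_sub_abs_le_abs_sub ν t
      nlinarith [sq_abs (ν - t), sq_abs ν, sq_nonneg γ, abs_nonneg (ν - t)]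
    have hnum : |t * (2 * ν - t)| ≤ |t| * (5 * |ν| / 2) := by
      rw [abs_mul]
      have h2 : |2 * ν - t| ≤ 2 * |ν| + |t| := by
        calc |2 * ν - t| ≤ |2 * ν| + |t| := abs_sub _ _
        _ = 2 * |ν| + |t| := by rw [abs_mul]; norm_num
      nlinarith [abs_nonneg t]
    have hE : Real.exp (-t ^ 2) * |t| ≤ Real.exp (-t ^ 2 / 4) := by
      have h1 := abs_le_exp_sq_quarter t
      have h2 : Real.exp (-t ^ 2) * Real.exp (t ^ 2 / 4) ≤ Real.exp (-t ^ 2 / 4) := by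
        rw [← Real.exp_add]
        apply Real.exp_le_exp.2
        nlinarith [sq_nonneg t]
      calc Real.exp (-t ^ 2) * |t| ≤ Real.exp (-t ^ 2) * Real.exp (t ^ 2 / 4) := by
            apply mul_le_mul_of_nonneg_left h1 (Real.exp_pos _).le
        _ ≤ Real.exp (-t ^ 2 / 4) := h2
    have key : Real.exp (-t ^ 2) * (|t * (2 * ν - t)| / (γ ^ 2 + (ν - t) ^ 2)) ≤
        (10 / |ν|) * Real.exp (-t ^ 2 / 4) := by
      have hν2 : 0 < ν ^ 2 := by nlinarith [sq_abs ν]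
      have hνne : |ν| ≠ 0 := ne_of_gt hν
      have step1 : |t * (2 * ν - t)| / (γ ^ 2 + (ν - t) ^ 2) ≤
          (|t| * (5 * |ν| / 2)) / (ν ^ 2 / 4) := by
        apply div_le_div₀ (by positivity) hnum (by linarith) hd
      have step2 : (|t| * (5 * |ν| / 2)) / (ν ^ 2 / 4) = (10 / |ν|) * |t| := by
        rw [← sq_abs ν]
        field_simp
        ring
      calc Real.exp (-t ^ 2) * (|t * (2 * ν - t)| / (γ ^ 2 + (ν - t) ^ 2))
          ≤ Real.exp (-t ^ 2) * ((10 / |ν|) * |t|) := by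
            rw [← step2]; exact mul_le_mul_of_nonneg_left step1 (Real.exp_pos _).le
        _ = (10 / |ν|) * (Real.exp (-t ^ 2) * |t|) := by ring
        _ ≤ (10 / |ν|) * Real.exp (-t ^ 2 / 4) := by
            exact mul_le_mul_of_nonneg_left hE hC1
    nlinarith [Real.exp_pos (-t ^ 2 / 4)]
  · -- |t| > |ν|/2 : exponential is small
    have hnum : |t * (2 * ν - t)| ≤ 5 * t ^ 2 := by
      rw [abs_mul]
      have h2 : |2 * ν - t| ≤ 2 * |ν| + |t| := by
        calc |2 * ν - t| ≤ |2 * ν| + |t| := abs_sub _ _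
        _ = 2 * |ν| + |t| := by rw [abs_mul]; norm_num
      nlinarith [abs_nonneg t, sq_abs t, abs_nonneg ν]
    have hd : γ ^ 2 ≤ γ ^ 2 + (ν - t) ^ 2 := by nlinarith [sq_nonneg (ν - t)]
    have hEsplit : Real.exp (-t ^ 2) ≤ Real.exp (-ν ^ 2 / 8) * Real.exp (-t ^ 2 / 2) := by
      rw [← Real.exp_add]
      apply Real.exp_le_exp.2
      nlinarith [sq_abs t, sq_abs ν, abs_nonneg ν]
    have hE2 : t ^ 2 * Real.exp (-t ^ 2 / 2) ≤ 2 * Real.exp (-t ^ 2 / 4) := by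
      have h1 := sq_le_two_exp_sq_quarter t
      have h2 : Real.exp (t ^ 2 / 4) * Real.exp (-t ^ 2 / 2) = Real.exp (-t ^ 2 / 4) := by
        rw [← Real.exp_add]; ring_nf
      nlinarith [Real.exp_pos (-t ^ 2 / 2)]
    have key : Real.exp (-t ^ 2) * (|t * (2 * ν - t)| / (γ ^ 2 + (ν - t) ^ 2)) ≤
        (10 * Real.exp (-ν ^ 2 / 8) / γ ^ 2) * Real.exp (-t ^ 2 / 4) := by
      have step1 : |t * (2 * ν - t)| / (γ ^ 2 + (ν - t) ^ 2) ≤ 5 * t ^ 2 / γ ^ 2 :=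
        div_le_div₀ (by positivity) hnum (by positivity) hd
      calc Real.exp (-t ^ 2) * (|t * (2 * ν - t)| / (γ ^ 2 + (ν - t) ^ 2))
          ≤ Real.exp (-t ^ 2) * (5 * t ^ 2 / γ ^ 2) := by
            exact mul_le_mul_of_nonneg_left step1 (Real.exp_pos _).le
        _ ≤ (Real.exp (-ν ^ 2 / 8) * Real.exp (-t ^ 2 / 2)) * (5 * t ^ 2 / γ ^ 2) := by
            apply mul_le_mul_of_nonneg_right hEsplit (by positivity)
        _ = (5 * Real.exp (-ν ^ 2 / 8) / γ ^ 2) * (t ^ 2 * Real.exp (-t ^ 2 / 2)) := by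
            ring
        _ ≤ (5 * Real.exp (-ν ^ 2 / 8) / γ ^ 2) * (2 * Real.exp (-t ^ 2 / 4)) := by
            apply mul_le_mul_of_nonneg_left hE2 (by positivity)
        _ = (10 * Real.exp (-ν ^ 2 / 8) / γ ^ 2) * Real.exp (-t ^ 2 / 4) := by ring
    nlinarith [Real.exp_pos (-t ^ 2 / 4)]

set_option maxHeartbeats 1000000 in
private lemma integral_bound (γ ν : ℝ) (hγ : 0 < γ) (hν : 0 < |ν|) :
    |∫ t : ℝ, Real.exp (-t ^ 2) * (t * (2 * ν - t) / (γ ^ 2 + (ν - t) ^ 2))| ≤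
      (10 / |ν| + 10 * Real.exp (-ν ^ 2 / 8) / γ ^ 2) * (2 * Real.sqrt Real.pi) := by
  set C : ℝ := 10 / |ν| + 10 * Real.exp (-ν ^ 2 / 8) / γ ^ 2 with hC
  have hCpos : 0 < C := by positivity
  have hint : Integrable (fun t : ℝ => C * Real.exp (-(1/4 : ℝ) * t ^ 2)) := by
    exact (integrable_exp_neg_mul_sq (by norm_num : (0:ℝ) < 1/4)).const_mul C
  have hbound : ∀ t : ℝ, ‖Real.exp (-t ^ 2) * (t * (2 * ν - t) / (γ ^ 2 + (ν - t) ^ 2))‖ ≤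
      C * Real.exp (-(1/4 : ℝ) * t ^ 2) := by
    intro t
    have := pointwise_bound γ ν hγ hν t
    have heq : Real.exp (-(1/4 : ℝ) * t ^ 2) = Real.exp (-t ^ 2 / 4) := by ring_nf
    rw [Real.norm_eq_abs, heq]
    exact this
  have h1 : ‖∫ t : ℝ, Real.exp (-t ^ 2) * (t * (2 * ν - t) / (γ ^ 2 + (ν - t) ^ 2))‖ ≤
      ∫ t : ℝ, C * Real.exp (-(1/4 : ℝ) * t ^ 2) := by
    apply norm_integral_le_of_norm_le hint (Filter.Eventually.of_forall hbound)
  have h2 : ∫ t : ℝ, C * Real.exp (-(1/4 : ℝ) * t ^ 2) = C * (2 * Real.sqrt Real.pi) := by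
    rw [MeasureTheory.integral_const_mul, integral_gaussian]
    congr 1
    rw [show Real.pi / (1/4 : ℝ) = 4 * Real.pi by ring,
      show (4 : ℝ) * Real.pi = 2 ^ 2 * Real.pi by norm_num,
      Real.sqrt_mul (by positivity), Real.sqrt_sq (by norm_num : (0:ℝ) ≤ 2)]
  rw [← Real.norm_eq_abs]
  rw [h2] at h1
  exact h1

set_option maxHeartbeats 1000000 in
theorem voigt_far_wing_uniform_bound (n₁ : ℝ) (hn₁ : 0 < n₁) :
    ∀ ε > 0, ∃ n₃ > 0, ∀ γ' : ℝ, n₁ * Real.sqrt (Real.log 2) ≤ γ' →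
      ∀ ν' : ℝ, n₃ * Real.sqrt (Real.log 2) < |ν'| →
        |(1 / Real.sqrt Real.pi) * ∫ t : ℝ, Real.exp (-t ^ 2) *
            (t * (2 * ν' - t) / (γ' ^ 2 + (ν' - t) ^ 2))| < ε := by
  intro ε hε
  have hlog : 0 < Real.log 2 := Real.log_pos (by norm_num)
  have hsl : 0 < Real.sqrt (Real.log 2) := Real.sqrt_pos.2 hlog
  have hKpos : 0 < 40 / ε + Real.sqrt (320 / (ε * n₁ ^ 2 * Real.log 2)) + 1 := by positivity
  refine ⟨(40 / ε + Real.sqrt (320 / (ε * n₁ ^ 2 * Real.log 2)) + 1) / Real.sqrt (Real.log 2),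
    by positivity, ?_⟩
  intro γ' hγ' ν' hν'
  rw [div_mul_cancel₀ _ (ne_of_gt hsl)] at hν'
  have hνpos : 0 < |ν'| := lt_trans hKpos hν'
  have hγpos : 0 < γ' := lt_of_lt_of_le (by positivity) hγ'
  have hγsq : n₁ ^ 2 * Real.log 2 ≤ γ' ^ 2 := by
    nlinarith [Real.sq_sqrt hlog.le, mul_nonneg hn₁.le hsl.le, hγ']
  have hsp : 0 < Real.sqrt Real.pi := Real.sqrt_pos.2 Real.pi_pos
  -- main bound
  have hb := integral_bound γ' ν' hγpos hνpos
  have hmain : |(1 / Real.sqrt Real.pi) * ∫ t : ℝ, Real.exp (-t ^ 2) *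
      (t * (2 * ν' - t) / (γ' ^ 2 + (ν' - t) ^ 2))| ≤
      2 * (10 / |ν'| + 10 * Real.exp (-ν' ^ 2 / 8) / γ' ^ 2) := by
    rw [abs_mul, abs_of_pos (by positivity : 0 < 1 / Real.sqrt Real.pi)]
    rw [div_mul_eq_mul_div, one_mul, div_le_iff₀ hsp]
    calc |∫ t : ℝ, Real.exp (-t ^ 2) * (t * (2 * ν' - t) / (γ' ^ 2 + (ν' - t) ^ 2))|
        ≤ (10 / |ν'| + 10 * Real.exp (-ν' ^ 2 / 8) / γ' ^ 2) * (2 * Real.sqrt Real.pi) := hb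
      _ = 2 * (10 / |ν'| + 10 * Real.exp (-ν' ^ 2 / 8) / γ' ^ 2) * Real.sqrt Real.pi := by ring
  -- now the arithmetic
  have h40 : 40 / ε < |ν'| := by
    have : 0 ≤ Real.sqrt (320 / (ε * n₁ ^ 2 * Real.log 2)) := Real.sqrt_nonneg _
    linarith
  have hterm1 : 20 / |ν'| < ε / 2 := by
    rw [div_lt_div_iff₀ hνpos (by norm_num)]
    rw [div_lt_iff₀ hε] at h40
    nlinarith
  have hsq : 320 / (ε * n₁ ^ 2 * Real.log 2) < ν' ^ 2 := by
    have h1 : Real.sqrt (320 / (ε * n₁ ^ 2 * Real.log 2)) < |ν'| := by linarith [hν', div_pos (by norm_num : (0:ℝ) < 40) hε]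
    have h2 := Real.sq_sqrt (by positivity : (0:ℝ) ≤ 320 / (ε * n₁ ^ 2 * Real.log 2))
    nlinarith [Real.sqrt_nonneg (320 / (ε * n₁ ^ 2 * Real.log 2)), sq_abs ν']
  have hx : 0 < ν' ^ 2 := by nlinarith [sq_abs ν']
  have hexp : Real.exp (-ν' ^ 2 / 8) ≤ 8 / ν' ^ 2 := by
    have h1 : ν' ^ 2 / 8 ≤ Real.exp (ν' ^ 2 / 8) := by
      nlinarith [Real.add_one_le_exp (ν' ^ 2 / 8)]
    rw [show -ν' ^ 2 / 8 = -(ν' ^ 2 / 8) by ring, Real.exp_neg]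
    rw [inv_le_comm₀ (Real.exp_pos _) (div_pos (by norm_num) hx)]
    calc (8 / ν' ^ 2)⁻¹ = ν' ^ 2 / 8 := by field_simp
      _ ≤ Real.exp (ν' ^ 2 / 8) := h1
  have hterm2 : 20 * Real.exp (-ν' ^ 2 / 8) / γ' ^ 2 < ε / 2 := by
    have hγ2 : 0 < γ' ^ 2 := by positivity
    have h1 : 20 * Real.exp (-ν' ^ 2 / 8) / γ' ^ 2 ≤ 160 / (ν' ^ 2 * (n₁ ^ 2 * Real.log 2)) := by
      have hln : 0 < n₁ ^ 2 * Real.log 2 := by positivity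
      calc 20 * Real.exp (-ν' ^ 2 / 8) / γ' ^ 2 ≤ 20 * (8 / ν' ^ 2) / (n₁ ^ 2 * Real.log 2) := by
            apply div_le_div₀ (by positivity) (by nlinarith) hln hγsq
        _ = 160 / (ν' ^ 2 * (n₁ ^ 2 * Real.log 2)) := by field_simp; ring
    have h2 : 160 / (ν' ^ 2 * (n₁ ^ 2 * Real.log 2)) < ε / 2 := by
      rw [div_lt_div_iff₀ (mul_pos hx (by positivity)) (by norm_num)]
      rw [div_lt_iff₀ (by positivity : (0:ℝ) < ε * n₁ ^ 2 * Real.log 2)] at hsq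
      nlinarith
    linarith
  have hfin : 2 * (10 / |ν'| + 10 * Real.exp (-ν' ^ 2 / 8) / γ' ^ 2) < ε := by
    have e1 : 2 * (10 / |ν'|) = 20 / |ν'| := by ring
    have e2 : 2 * (10 * Real.exp (-ν' ^ 2 / 8) / γ' ^ 2) = 20 * Real.exp (-ν' ^ 2 / 8) / γ' ^ 2 := by
      ring
    linarith
  linarith
end

section
/- The classical Voigt profile can be expressed via the Faddeeva function: f_V(ν) = √(ln2/π)·(1/α)·Re{w(x + iy)} where x = ν√(ln2)/α, y = γ√(ln2)/α, f_V = f_G ∗ f_L, and w(z) = (i/π)∫_{−∞}^{∞} e^{−t²}/(z−t) dt for Im z > 0. -/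
open MeasureTheory Complex

/-- The Faddeeva function for `Im z > 0`, via its integral representation. -/
noncomputable def faddeeva (z : ℂ) : ℂ :=
  (I / Real.pi) * ∫ t : ℝ, Complex.exp (-(t : ℂ) ^ 2) / (z - (t : ℂ))

lemma faddeeva_integrable {z : ℂ} (hz : 0 < z.im) :
    Integrable fun t : ℝ => Complex.exp (-(t : ℂ) ^ 2) / (z - (t : ℂ)) := by
  have hne : ∀ t : ℝ, z - (t : ℂ) ≠ 0 := by
    intro t h
    have : (z - (t : ℂ)).im = 0 := by rw [h]; simp
    simp only [Complex.sub_im, Complex.ofReal_im, sub_zero] at this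
    linarith
  have hcont : Continuous fun t : ℝ => Complex.exp (-(t : ℂ) ^ 2) / (z - (t : ℂ)) := by
    apply Continuous.div
    · exact Complex.continuous_exp.comp (by continuity)
    · continuity
    · exact hne
  have hint : Integrable fun t : ℝ => (z.im)⁻¹ * Real.exp (-1 * t ^ 2) :=
    (integrable_exp_neg_mul_sq (by norm_num : (0:ℝ) < 1)).const_mul _
  refine hint.mono' hcont.aestronglyMeasurable (Filter.Eventually.of_forall fun t => ?_)
  have habs : ‖Complex.exp (-(t:ℂ)^2)‖ = Real.exp (-t^2) := by
    rw [Complex.norm_exp]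
    congr 1
    simp [← Complex.ofReal_pow]
  have hge : z.im ≤ ‖z - (t : ℂ)‖ := by
    have := Complex.abs_im_le_norm (z - (t : ℂ))
    simp only [Complex.sub_im, Complex.ofReal_im, sub_zero] at this
    calc z.im ≤ |z.im| := le_abs_self _
    _ ≤ _ := this
  rw [norm_div, habs]
  rw [div_le_iff₀ (lt_of_lt_of_le hz hge)]
  calc Real.exp (-t^2) = z.im⁻¹ * Real.exp (-1 * t^2) * z.im := by
        field_simp
    _ ≤ z.im⁻¹ * Real.exp (-1 * t^2) * ‖z - (t : ℂ)‖ := by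
        apply mul_le_mul_of_nonneg_left hge
        positivity

lemma faddeeva_re (x y : ℝ) (hy : 0 < y) :
    (faddeeva ((x : ℂ) + I * y)).re =
      (Real.pi)⁻¹ * ∫ t : ℝ, Real.exp (-t ^ 2) * (y / ((x - t) ^ 2 + y ^ 2)) := by
  set z : ℂ := (x : ℂ) + I * y with hzdef
  have hzim : z.im = y := by simp [hzdef]
  have hint := faddeeva_integrable (z := z) (by rw [hzim]; exact hy)
  have him : (∫ t : ℝ, Complex.exp (-(t : ℂ) ^ 2) / (z - (t : ℂ))).im
      = ∫ t : ℝ, (Complex.exp (-(t : ℂ) ^ 2) / (z - (t : ℂ))).im := by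
    exact (integral_im hint).symm
  have hpt : ∀ t : ℝ, (Complex.exp (-(t : ℂ) ^ 2) / (z - (t : ℂ))).im
      = -(Real.exp (-t ^ 2) * (y / ((x - t) ^ 2 + y ^ 2))) := by
    intro t
    have hexp : Complex.exp (-(t : ℂ) ^ 2) = ((Real.exp (-t ^ 2) : ℝ) : ℂ) := by
      rw [Complex.ofReal_exp]
      push_cast
      ring_nf
    rw [hexp, div_eq_mul_inv, Complex.im_ofReal_mul, Complex.inv_im]
    have h1 : (z - (t : ℂ)).im = y := by simp [hzdef]
    have h2 : Complex.normSq (z - (t : ℂ)) = (x - t) ^ 2 + y ^ 2 := by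
      rw [Complex.normSq_apply]
      have : (z - (t : ℂ)).re = x - t := by simp [hzdef]
      rw [this, h1]; ring
    rw [h1, h2]
    ring
  unfold faddeeva
  rw [show (I / (Real.pi : ℂ)) = ((Real.pi⁻¹ : ℝ) : ℂ) * I by push_cast; ring,
    mul_assoc, Complex.re_ofReal_mul, Complex.I_mul_re]
  rw [him]
  simp only [hpt]
  rw [integral_neg]
  ring

theorem voigt_via_faddeeva (α γ : ℝ) (hα : 0 < α) (hγ : 0 < γ) (ν : ℝ) :
    let fG : ℝ → ℝ := fun t => Real.sqrt (Real.log 2 / Real.pi) * (1 / α) *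
      Real.exp (-t ^ 2 * Real.log 2 / α ^ 2)
    let fL : ℝ → ℝ := fun s => (1 / Real.pi) * γ / (s ^ 2 + γ ^ 2)
    let fV : ℝ → ℝ := fun ν => ∫ t : ℝ, fG t * fL (ν - t)
    let x : ℝ := ν * Real.sqrt (Real.log 2) / α
    let y : ℝ := γ * Real.sqrt (Real.log 2) / α
    fV ν = Real.sqrt (Real.log 2 / Real.pi) * (1 / α) * (faddeeva (x + I * y)).re := by
  intro fG fL fV x y
  have hL : (0:ℝ) < Real.log 2 := Real.log_pos one_lt_two
  set sL : ℝ := Real.sqrt (Real.log 2) with hsLdef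
  have hsL : 0 < sL := Real.sqrt_pos.mpr hL
  have hsL2 : sL ^ 2 = Real.log 2 := Real.sq_sqrt hL.le
  have hy : 0 < y := by
    show 0 < γ * sL / α
    positivity
  set c : ℝ := α / sL with hcdef
  have hc : 0 < c := by positivity
  rw [faddeeva_re x y hy]
  -- change of variables on the LHS
  show (∫ t : ℝ, fG t * fL (ν - t)) = _
  rw [show (∫ t : ℝ, fG t * fL (ν - t))
      = |c⁻¹|⁻¹ • ∫ s : ℝ, fG (c * s) * fL (ν - c * s) by
    rw [MeasureTheory.Measure.integral_comp_mul_left (fun t => fG t * fL (ν - t)) c]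
    rw [smul_smul]
    rw [inv_mul_cancel₀ (by positivity : |c⁻¹| ≠ 0)]
    simp]
  have hcx : c * x = ν := by
    show (α / sL) * (ν * sL / α) = ν
    field_simp
  have hcy : c * y = γ := by
    show (α / sL) * (γ * sL / α) = γ
    field_simp
  have hpt : ∀ s : ℝ, fG (c * s) * fL (ν - c * s)
      = (Real.sqrt (Real.log 2 / Real.pi) * (1 / α) * Real.pi⁻¹ / c)
        * (Real.exp (-s ^ 2) * (y / ((x - s) ^ 2 + y ^ 2))) := by
    intro s
    have h1 : -(c * s) ^ 2 * Real.log 2 / α ^ 2 = -s ^ 2 := by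
      show -(α / sL * s) ^ 2 * Real.log 2 / α ^ 2 = -s ^ 2
      rw [← hsL2]
      field_simp
    have h2 : (ν - c * s) ^ 2 + γ ^ 2 = c ^ 2 * ((x - s) ^ 2 + y ^ 2) := by
      rw [← hcx, ← hcy]; ring
    show Real.sqrt (Real.log 2 / Real.pi) * (1 / α) * Real.exp (-(c*s) ^ 2 * Real.log 2 / α ^ 2)
        * ((1 / Real.pi) * γ / ((ν - c * s) ^ 2 + γ ^ 2)) = _
    rw [h1, h2, ← hcy]
    have hd : (x - s) ^ 2 + y ^ 2 > 0 := by positivity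
    have hpi : (0:ℝ) < Real.pi := Real.pi_pos
    field_simp
  simp only [hpt]
  rw [MeasureTheory.integral_const_mul]
  rw [abs_inv, abs_of_pos hc, inv_inv, smul_eq_mul]
  field_simp
  ring_nf
  congr 1
  funext t
  ring
end

section
/- For Im z > 0, the imaginary part of i·w(z) is nonnegative, where w(z) = (i/π)∫_{−∞}^{∞} e^{−t²}/(z−t) dt; that is, i·w is a Herglotz function on the upper half-plane. -/
open MeasureTheory Complex

lemma fdv_sub_ne {z : ℂ} (hz : 0 < z.im) (t : ℝ) : z - (t : ℂ) ≠ 0 := by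
  intro h
  have := congrArg Complex.im h
  simp at this
  linarith

lemma fdv_abs_ge {z : ℂ} (hz : 0 < z.im) (t : ℝ) : z.im ≤ ‖z - (t : ℂ)‖ := by
  have h := Complex.abs_im_le_norm (z - t)
  simp only [Complex.sub_im, Complex.ofReal_im, sub_zero] at h
  calc z.im ≤ |z.im| := le_abs_self _
    _ ≤ _ := h

lemma fdv_norm_exp (t : ℝ) : ‖Complex.exp (-(t : ℂ) ^ 2)‖ = Real.exp (-t ^ 2) := by
  rw [Complex.norm_exp]
  norm_num
  rw [← Complex.ofReal_pow, Complex.ofReal_re]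

lemma fdv_cont {z : ℂ} (hz : 0 < z.im) :
    Continuous (fun t : ℝ => Complex.exp (-(t : ℂ) ^ 2) / (z - (t : ℂ))) := by
  apply Continuous.div
  · exact Complex.continuous_exp.comp (by continuity)
  · continuity
  · exact fun t => fdv_sub_ne hz t

lemma fdv_integrable {z : ℂ} (hz : 0 < z.im) :
    Integrable (fun t : ℝ => Complex.exp (-(t : ℂ) ^ 2) / (z - (t : ℂ))) := by
  refine Integrable.mono' (((integrable_exp_neg_mul_sq one_pos).const_mul (z.im)⁻¹))
    ((fdv_cont hz).aestronglyMeasurable) (Filter.Eventually.of_forall fun t => ?_)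
  have hpos : (0:ℝ) < ‖z - (t:ℂ)‖ := lt_of_lt_of_le hz (fdv_abs_ge hz t)
  rw [norm_div, fdv_norm_exp, div_le_iff₀ hpos]
  have h3 : z.im⁻¹ * z.im = 1 := inv_mul_cancel₀ hz.ne'
  have he : Real.exp (-1 * t ^ 2) = Real.exp (-t ^ 2) := by rw [neg_one_mul]
  rw [he]
  have hm := mul_le_mul_of_nonneg_left (fdv_abs_ge hz t)
    (by positivity : (0:ℝ) ≤ z.im⁻¹ * Real.exp (-t ^ 2))
  have heq : z.im⁻¹ * Real.exp (-t ^ 2) * z.im = Real.exp (-t ^ 2) := by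
    field_simp
  linarith

lemma fdv_deriv {z : ℂ} (hz : 0 < z.im) (t : ℝ) :
    HasDerivAt (fun w : ℂ => Complex.exp (-(t : ℂ) ^ 2) / (w - (t : ℂ)))
      (-(Complex.exp (-(t : ℂ) ^ 2) / (z - (t : ℂ)) ^ 2)) z := by
  have h1 : HasDerivAt (fun w : ℂ => w - (t : ℂ)) 1 z := by
    simpa using (hasDerivAt_id z).sub_const (t : ℂ)
  have h2 := h1.inv (fdv_sub_ne hz t)
  have h3 := h2.const_mul (Complex.exp (-(t : ℂ) ^ 2))
  have h4 : -(Complex.exp (-(t : ℂ) ^ 2) / (z - (t : ℂ)) ^ 2)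
      = Complex.exp (-(t : ℂ) ^ 2) * (-1 / (z - (t : ℂ)) ^ 2) := by ring
  rw [h4]
  exact h3

lemma fdv_diff {z : ℂ} (hz : 0 < z.im) :
    DifferentiableAt ℂ (fun w : ℂ => ∫ t : ℝ, Complex.exp (-(t : ℂ) ^ 2) / (w - (t : ℂ))) z := by
  have hε : (0:ℝ) < z.im / 2 := by linarith
  have him : ∀ w ∈ Metric.ball z (z.im / 2), z.im / 2 < w.im := by
    intro w hw
    have h := Complex.abs_im_le_norm (w - z)
    simp only [Complex.sub_im] at h
    rw [Metric.mem_ball, Complex.dist_eq] at hw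
    have := abs_lt.1 (lt_of_le_of_lt h hw)
    linarith [this.1]
  have key := hasDerivAt_integral_of_dominated_loc_of_deriv_le (μ := volume)
    (F := fun w t => Complex.exp (-(t : ℂ) ^ 2) / (w - (t : ℂ)))
    (F' := fun w t => -(Complex.exp (-(t : ℂ) ^ 2) / (w - (t : ℂ)) ^ 2))
    (x₀ := z) (bound := fun t => Real.exp (-t ^ 2) * (2 / z.im) ^ 2) (Metric.ball_mem_nhds z hε)
    ?_ (fdv_integrable hz) ?_ (Filter.Eventually.of_forall ?_) ?_
    (Filter.Eventually.of_forall ?_)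
  · exact key.2.differentiableAt
  · -- eventual measurability
    have hopen : IsOpen {w : ℂ | 0 < w.im} := isOpen_lt continuous_const Complex.continuous_im
    exact Filter.eventually_of_mem (hopen.mem_nhds hz)
      (fun w hw => ((fdv_cont hw).aestronglyMeasurable))
  · -- AESM of F' z
    apply Continuous.aestronglyMeasurable
    apply Continuous.neg
    apply Continuous.div
    · exact Complex.continuous_exp.comp (by continuity)
    · continuity
    · exact fun t => pow_ne_zero _ (fdv_sub_ne hz t)
  · -- bound
    intro t w hw
    have hwim : 0 < w.im := lt_trans hε (him w hw)
    simp only [norm_neg, norm_div, fdv_norm_exp, norm_pow]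
    have hnorm : (0:ℝ) < ‖w - (t:ℂ)‖ := lt_of_lt_of_le hwim (fdv_abs_ge hwim t)
    rw [div_le_iff₀ (by positivity)]
    have h1 : z.im / 2 ≤ ‖w - (t:ℂ)‖ := (him w hw).le.trans (fdv_abs_ge hwim t)
    have h2 : (z.im / 2) ^ 2 ≤ ‖w - (t:ℂ)‖ ^ 2 := pow_le_pow_left₀ hε.le h1 2
    have hq : (0:ℝ) < (2 / z.im) ^ 2 := by positivity
    have he := Real.exp_pos (-t ^ 2)
    have hkey : (2 / z.im) ^ 2 * (z.im / 2) ^ 2 = 1 := by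
      field_simp
    have hstep : Real.exp (-t ^ 2) * ((2 / z.im) ^ 2 * (z.im / 2) ^ 2)
        ≤ Real.exp (-t ^ 2) * ((2 / z.im) ^ 2 * ‖w - (t:ℂ)‖ ^ 2) :=
      mul_le_mul_of_nonneg_left (mul_le_mul_of_nonneg_left h2 hq.le) he.le
    rw [hkey, mul_one] at hstep
    calc Real.exp (-t ^ 2) ≤ _ := hstep
      _ = Real.exp (-t ^ 2) * (2 / z.im) ^ 2 * ‖w - (t:ℂ)‖ ^ 2 := by ring
  · -- bound integrable
    refine ((integrable_exp_neg_mul_sq one_pos).mul_const ((2 / z.im) ^ 2)).congr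
      (Filter.Eventually.of_forall fun t => ?_)
    norm_num
  · intro t w hw
    exact fdv_deriv (lt_trans hε (him w hw)) t

theorem faddeeva_herglotz :
    DifferentiableOn ℂ (fun z => I * faddeeva z) {z : ℂ | 0 < z.im} ∧
    ∀ z : ℂ, 0 < z.im → 0 ≤ (I * faddeeva z).im := by
  constructor
  · intro z hz
    simp only [Set.mem_setOf_eq] at hz
    apply DifferentiableAt.differentiableWithinAt
    simp only [faddeeva]
    exact (((fdv_diff hz).const_mul (I / Real.pi)).const_mul I)
  · intro z hz
    have hne := fdv_sub_ne hz
    have hpi : (0:ℝ) < Real.pi := Real.pi_pos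
    have key : (I * faddeeva z) = ((-(Real.pi⁻¹) : ℝ) : ℂ) *
        ∫ t : ℝ, Complex.exp (-(t : ℂ) ^ 2) / (z - (t : ℂ)) := by
      simp only [faddeeva]
      rw [← mul_assoc]
      congr 1
      rw [← mul_div_assoc, Complex.I_mul_I]
      push_cast
      ring
    rw [key]
    rw [show (((-(Real.pi⁻¹) : ℝ) : ℂ) * ∫ t : ℝ,
        Complex.exp (-(t : ℂ) ^ 2) / (z - (t : ℂ))).im
      = (-(Real.pi⁻¹)) * (∫ t : ℝ, Complex.exp (-(t : ℂ) ^ 2) / (z - (t : ℂ))).im by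
      simp [Complex.mul_im]]
    rw [show (∫ t : ℝ, Complex.exp (-(t : ℂ) ^ 2) / (z - (t : ℂ))).im
        = ∫ t : ℝ, (Complex.exp (-(t : ℂ) ^ 2) / (z - (t : ℂ))).im by
      rw [← RCLike.im_eq_complex_im, ← integral_im (fdv_integrable hz)]]
    have him : ∀ t : ℝ, (Complex.exp (-(t : ℂ) ^ 2) / (z - (t : ℂ))).im ≤ 0 := by
      intro t
      have he : Complex.exp (-(t : ℂ) ^ 2) = ((Real.exp (-t ^ 2) : ℝ) : ℂ) := by
        rw [Complex.ofReal_exp]; norm_num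
      have hmul : ∀ (r : ℝ) (u : ℂ), ((r : ℂ) * u).im = r * u.im := fun r u => by
        simp [Complex.mul_im]
      rw [he, div_eq_mul_inv, hmul, Complex.inv_im]
      have h1 : (z - (t:ℂ)).im = z.im := by simp
      rw [h1]
      have hnsq : 0 < Complex.normSq (z - (t:ℂ)) := by
        rw [Complex.normSq_pos]; exact hne t
      have h2 : -z.im / Complex.normSq (z - (t:ℂ)) ≤ 0 :=
        div_nonpos_of_nonpos_of_nonneg (by linarith) hnsq.le
      have := Real.exp_pos (-t ^ 2)
      nlinarith
    have hint : (∫ t : ℝ, (Complex.exp (-(t : ℂ) ^ 2) / (z - (t : ℂ))).im) ≤ 0 :=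
      integral_nonpos him
    nlinarith [inv_pos.2 hpi]
end

section
/- For the full Voigt profile f_FV = f_G ∗ f_FL (convolution of the Gaussian with the full Lorentz profile), one has f_FV(ν) = Im{h_FV(ν)}, where h_FV(ν) = √(ln2/π)·(1/α)·[(−γ/a + i)·w((ν+a+iγ)√(ln2)/α) + (γ/a + i)·w((ν−a+iγ)√(ln2)/α)], with a = √(ν₀² − γ²), provided ν₀ > γ > 0 and α > 0, and w the Faddeeva function. -/
open MeasureTheory Complex

noncomputable def Fint (z : ℂ) : ℂ := ∫ t : ℝ, Complex.exp (-(t : ℂ) ^ 2) / (z - (t : ℂ))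

lemma faddeeva_eq (z : ℂ) : faddeeva z = (I / Real.pi) * Fint z := rfl

lemma integrable_aux (z : ℂ) (hz : z.im ≠ 0) :
    Integrable (fun u : ℝ => Complex.exp (-(u:ℂ)^2) / (z - u)) := by
  have hzu : ∀ u : ℝ, z - (u:ℂ) ≠ 0 := by
    intro u h
    apply hz
    have := congrArg Complex.im h
    simpa using this
  have hcont : Continuous fun u : ℝ => Complex.exp (-(u:ℂ)^2) / (z - u) := by
    apply Continuous.div
    · exact (Complex.continuous_exp.comp (by continuity))
    · continuity
    · exact fun u => hzu u
  refine Integrable.mono' ((integrable_exp_neg_mul_sq one_pos).mul_const |z.im|⁻¹)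
    hcont.aestronglyMeasurable ?_
  filter_upwards with u
  rw [norm_div]
  have h1 : ‖Complex.exp (-(u:ℂ)^2)‖ = Real.exp (-1 * u^2) := by
    rw [Complex.norm_exp]
    norm_num
    simp [← Complex.ofReal_pow]
  rw [h1, mul_comm (Real.exp (-1*u^2)), ← div_eq_inv_mul]
  have h2 : |z.im| ≤ ‖z - (u:ℂ)‖ := by
    have := Complex.abs_im_le_norm (z - u)
    simpa using this
  exact div_le_div_of_nonneg_left (Real.exp_nonneg _) (abs_pos.mpr hz) h2

lemma factD (nr aa g s : ℝ) (h : nr ^ 2 = aa ^ 2 + g ^ 2) :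
    ((nr ^ 2 - s ^ 2 : ℝ):ℂ) - 2 * (g:ℂ) * (s:ℂ) * I =
    -((((s:ℝ):ℂ) - aa + I * g) * (((s:ℝ):ℂ) + aa + I * g)) := by
  have h2 : ((nr ^ 2 - s ^ 2 : ℝ):ℂ) = ((aa:ℂ)^2 + (g:ℂ)^2 - (s:ℂ)^2) := by
    push_cast [h]; ring
  rw [h2]
  linear_combination (g:ℂ)^2 * Complex.I_sq

lemma voigt_pf (Cr pr cc aa g s : ℝ) (E : ℂ)
    (hπ : (pr:ℂ) ≠ 0) (ha : (aa:ℂ) ≠ 0) (hc : (cc:ℂ) ≠ 0)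
    (hF₁ : ((s:ℂ) - aa + I * g) ≠ 0) (hF₂ : ((s:ℂ) + aa + I * g) ≠ 0) :
    (Cr:ℂ) * E * (((2 / pr : ℝ):ℂ) * (s:ℂ) * (-(((s:ℂ) - aa + I * g) * ((s:ℂ) + aa + I * g)))⁻¹) =
    (cc:ℂ) * ((Cr:ℂ) * ((I * g - aa) / (aa * pr)) * (E / ((cc:ℂ) * ((s:ℂ) - aa + I * g)))
      + (Cr:ℂ) * ((-(I * g) - aa) / (aa * pr)) * (E / ((cc:ℂ) * ((s:ℂ) + aa + I * g)))) := by
  push_cast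
  field_simp
  ring

theorem full_voigt_via_faddeeva (α γ ν₀ : ℝ) (hα : 0 < α) (hγ : 0 < γ) (hν₀ : γ < ν₀) (ν : ℝ) :
    let fG : ℝ → ℝ := fun t => Real.sqrt (Real.log 2 / Real.pi) * (1 / α) *
      Real.exp (-t ^ 2 * Real.log 2 / α ^ 2)
    let fFL : ℝ → ℝ := fun s =>
      (4 / Real.pi) * (γ * s ^ 2) / ((ν₀ ^ 2 - s ^ 2) ^ 2 + 4 * γ ^ 2 * s ^ 2)
    let fFV : ℝ → ℝ := fun ν => ∫ t : ℝ, fG t * fFL (ν - t)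
    let a : ℝ := Real.sqrt (ν₀ ^ 2 - γ ^ 2)
    let hFV : ℂ :=
      ((Real.sqrt (Real.log 2 / Real.pi) * (1 / α) : ℝ) : ℂ) *
        (((-(γ / a) : ℝ) + I) *
            faddeeva ((((ν + a : ℝ) : ℂ) + I * (γ : ℂ)) * ((Real.sqrt (Real.log 2) / α : ℝ) : ℂ))
          + (((γ / a : ℝ) : ℂ) + I) *
            faddeeva ((((ν - a : ℝ) : ℂ) + I * (γ : ℂ)) * ((Real.sqrt (Real.log 2) / α : ℝ) : ℂ)))
    fFV ν = hFV.im := by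
  intro fG fFL fFV a hFV
  have hπ : (0:ℝ) < Real.pi := Real.pi_pos
  have hL : (0:ℝ) < Real.log 2 := Real.log_pos one_lt_two
  have hν2 : (0:ℝ) < ν₀ ^ 2 - γ ^ 2 := by nlinarith
  have ha2 : a ^ 2 = ν₀ ^ 2 - γ ^ 2 := Real.sq_sqrt hν2.le
  have ha : 0 < a := Real.sqrt_pos.mpr hν2
  have hν₀2 : (ν₀ : ℝ) ^ 2 = a ^ 2 + γ ^ 2 := by linarith
  have haC : (a:ℂ) ≠ 0 := Complex.ofReal_ne_zero.mpr ha.ne'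
  have hπC : (Real.pi:ℂ) ≠ 0 := Complex.ofReal_ne_zero.mpr hπ.ne'
  set c : ℝ := Real.sqrt (Real.log 2) / α with hcdef
  have hc : 0 < c := div_pos (Real.sqrt_pos.mpr hL) hα
  have hcC : (c:ℂ) ≠ 0 := Complex.ofReal_ne_zero.mpr hc.ne'
  have hc2 : c ^ 2 = Real.log 2 / α ^ 2 := by
    rw [hcdef, div_pow, Real.sq_sqrt hL.le]
  set C : ℝ := Real.sqrt (Real.log 2 / Real.pi) * (1 / α) with hCdef
  set z₁ : ℂ := (((ν - a : ℝ) : ℂ) + I * (γ : ℂ)) * ((c : ℝ) : ℂ) with hz₁def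
  set z₂ : ℂ := (((ν + a : ℝ) : ℂ) + I * (γ : ℂ)) * ((c : ℝ) : ℂ) with hz₂def
  have hz₁im : z₁.im = γ * c := by simp [hz₁def]
  have hz₂im : z₂.im = γ * c := by simp [hz₂def]
  have hγc : γ * c ≠ 0 := by positivity
  set K₁ : ℂ := (C : ℂ) * (((γ / a : ℝ) : ℂ) + I) * (I / Real.pi) with hK₁def
  set K₂ : ℂ := (C : ℂ) * (((-(γ / a) : ℝ) : ℂ) + I) * (I / Real.pi) with hK₂def
  have hK₁' : K₁ = (C : ℂ) * ((I * γ - a) / (a * Real.pi)) := by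
    rw [hK₁def]
    field_simp
    have hga : ((γ / a : ℝ) : ℂ) * a = γ := by push_cast; field_simp
    linear_combination (C : ℂ) * a * Complex.I_sq + (C : ℂ) * I * hga
  have hK₂' : K₂ = (C : ℂ) * ((-(I * γ) - a) / (a * Real.pi)) := by
    rw [hK₂def]
    field_simp
    have hga : ((-(γ / a) : ℝ) : ℂ) * a = -γ := by push_cast; field_simp
    linear_combination (C : ℂ) * a * Complex.I_sq + (C : ℂ) * I * hga
  set H : ℝ → ℂ := fun u =>
    K₁ * (Complex.exp (-(u:ℂ)^2) / (z₁ - u)) + K₂ * (Complex.exp (-(u:ℂ)^2) / (z₂ - u)) with hHdef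
  set D : ℝ → ℂ := fun s => ((ν₀ ^ 2 - s ^ 2 : ℝ) : ℂ) - 2 * (γ:ℂ) * (s:ℂ) * I with hDdef
  set G : ℝ → ℂ := fun t => ((fG t : ℝ) : ℂ) *
    (((2 / Real.pi : ℝ) : ℂ) * ((ν - t : ℝ) : ℂ) * (D (ν - t))⁻¹) with hGdef
  -- denominator facts
  have hden : ∀ s : ℝ, (0:ℝ) < (ν₀ ^ 2 - s ^ 2) ^ 2 + 4 * γ ^ 2 * s ^ 2 := by
    intro s
    rcases eq_or_ne s 0 with h | h
    · subst h
      have h0 : 0 < ν₀ := lt_trans hγ hν₀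
      simp
      positivity
    · positivity
  have hDre : ∀ s : ℝ, (D s).re = ν₀ ^ 2 - s ^ 2 := by
    intro s; simp [hDdef, pow_two]
  have hDim : ∀ s : ℝ, (D s).im = -(2 * γ * s) := by
    intro s; simp [hDdef, pow_two]
  have hnsq : ∀ s : ℝ, Complex.normSq (D s) = (ν₀ ^ 2 - s ^ 2) ^ 2 + 4 * γ ^ 2 * s ^ 2 := by
    intro s
    rw [Complex.normSq_apply, hDre, hDim]
    ring
  -- pointwise imaginary part identity
  have him : ∀ t : ℝ, (G t).im = fG t * fFL (ν - t) := by
    intro t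
    have hcast : G t = ((fG t * (2 / Real.pi) * (ν - t) : ℝ) : ℂ) * (D (ν - t))⁻¹ := by
      simp only [hGdef]
      push_cast
      ring
    rw [hcast, Complex.im_ofReal_mul, Complex.inv_im, hDim, hnsq]
    show _ = fG t * ((4 / Real.pi) * (γ * (ν - t) ^ 2) /
      ((ν₀ ^ 2 - (ν - t) ^ 2) ^ 2 + 4 * γ ^ 2 * (ν - t) ^ 2))
    field_simp
    ring
  -- the key pointwise algebraic identity
  have hGH : ∀ t : ℝ, G t = c • H (c * t) := by
    intro t
    have hF₁ : (((ν - t : ℝ):ℂ) - a + I * γ) ≠ 0 := by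
      intro h
      have := congrArg Complex.im h
      simp at this
      exact hγ.ne' this
    have hF₂ : (((ν - t : ℝ):ℂ) + a + I * γ) ≠ 0 := by
      intro h
      have := congrArg Complex.im h
      simp at this
      exact hγ.ne' this
    have hDf : D (ν - t) =
        -((((ν - t : ℝ):ℂ) - a + I * γ) * (((ν - t : ℝ):ℂ) + a + I * γ)) := by
      simp only [hDdef]
      exact factD ν₀ a γ (ν - t) hν₀2
    have hz1f : z₁ - ((c * t : ℝ) : ℂ) = (c:ℂ) * (((ν - t : ℝ):ℂ) - a + I * γ) := by
      rw [hz₁def]; push_cast; ring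
    have hz2f : z₂ - ((c * t : ℝ) : ℂ) = (c:ℂ) * (((ν - t : ℝ):ℂ) + a + I * γ) := by
      rw [hz₂def]; push_cast; ring
    have hexpR : -t ^ 2 * Real.log 2 / α ^ 2 = -(c * t) ^ 2 := by
      rw [mul_pow, hc2]; ring
    have hfGt : ((fG t : ℝ) : ℂ) = (C : ℂ) * Complex.exp (-((c * t : ℝ) : ℂ) ^ 2) := by
      show ((C * Real.exp (-t ^ 2 * Real.log 2 / α ^ 2) : ℝ) : ℂ) = _
      rw [Complex.ofReal_mul, hexpR, Complex.ofReal_exp]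
      norm_cast
    simp only [hGdef, hHdef]
    rw [Complex.real_smul, hfGt, hDf, hz1f, hz2f, hK₁', hK₂']
    exact voigt_pf C Real.pi c a γ (ν - t) _ hπC haC hcC hF₁ hF₂
  -- integrability
  have hi₁ : Integrable (fun u : ℝ => Complex.exp (-(u:ℂ)^2) / (z₁ - u)) :=
    integrable_aux z₁ (by rw [hz₁im]; exact hγc)
  have hi₂ : Integrable (fun u : ℝ => Complex.exp (-(u:ℂ)^2) / (z₂ - u)) :=
    integrable_aux z₂ (by rw [hz₂im]; exact hγc)
  have hHint : Integrable H := by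
    rw [hHdef]
    exact (hi₁.const_mul K₁).add (hi₂.const_mul K₂)
  have hGint : Integrable G := by
    rw [funext hGH]
    exact (hHint.comp_mul_left' hc.ne').smul c
  -- integral computation
  have hstep : (∫ t : ℝ, G t) = K₁ * Fint z₁ + K₂ * Fint z₂ := by
    rw [funext hGH, integral_smul, MeasureTheory.Measure.integral_comp_mul_left H c,
      abs_of_pos (inv_pos.mpr hc), smul_smul, mul_inv_cancel₀ hc.ne', one_smul, hHdef]
    rw [integral_add (hi₁.const_mul K₁) (hi₂.const_mul K₂),
      integral_const_mul, integral_const_mul]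
    rfl
  -- conclusion
  have hfinal : hFV = K₁ * Fint z₁ + K₂ * Fint z₂ := by
    show ((C : ℝ) : ℂ) * ((((-(γ / a) : ℝ) : ℂ) + I) * faddeeva z₂
        + (((γ / a : ℝ) : ℂ) + I) * faddeeva z₁) = _
    rw [faddeeva_eq, faddeeva_eq, hK₁def, hK₂def]
    ring
  calc fFV ν = ∫ t : ℝ, (G t).im := by
        show (∫ t : ℝ, fG t * fFL (ν - t)) = _
        simp only [← him]
    _ = (∫ t : ℝ, G t).im := integral_im hGint
    _ = hFV.im := by rw [hstep, hfinal]
end
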